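/- Let S = K \ L be a finite relative simplicial complex and let v be a vertex of K. Then sd(S) carries a Morse shelling which begins with st_{sd(S)}(v̂) = N(v, S), the derived neighborhood of v in S. -/

import Mathlib

/-!
Common combinatorial framework for Morse shellings of simplicial complexes,
following J.-Y. Welschinger, "Morse shellings out of discrete Morse functions".
-/

namespace MorseShelling

variable {V : Type*} [DecidableEq V] {W : Type*} [DecidableEq W]

/-- A (finite, combinatorial) simplicial complex: a downward-closed collection of
finite subsets (simplices) of the vertex type. -/
def IsComplex (K : Finset (Finset V)) : Prop :=
  ∀ σ ∈ K, ∀ τ ⊆ σ, τ ∈ K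

/-- A relative simplicial complex `S = K \ L`, recorded as the pair `(K, L)`. -/
structure RelCplx (V : Type*) where
  K : Finset (Finset V)
  L : Finset (Finset V)

/-- The faces of a relative simplicial complex. -/
def RelCplx.faces (S : RelCplx V) : Finset (Finset V) := S.K \ S.L

/-- Validity of a relative simplicial complex: both members are complexes and
`L` is a subcomplex of `K`. -/
def RelCplx.IsValid (S : RelCplx V) : Prop :=
  IsComplex S.K ∧ IsComplex S.L ∧ S.L ⊆ S.K

/-- Join of two collections of faces (on disjoint vertex supports). -/
def joinF (K₁ K₂ : Finset (Finset V)) : Finset (Finset V) :=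
  (K₁ ×ˢ K₂).image fun p => p.1 ∪ p.2

/-- Join of two relative simplicial complexes:
`(K₁ * K₂) \ ((L₁ * K₂) ∪ (K₁ * L₂))`. -/
def RelCplx.join (S₁ S₂ : RelCplx V) : RelCplx V :=
  ⟨joinF S₁.K S₂.K, joinF S₁.L S₂.K ∪ joinF S₁.K S₂.L⟩

/-- The star of a simplex `σ` in `K` : all faces `τ` with `σ ∪ τ ∈ K`. -/
def star (K : Finset (Finset V)) (σ : Finset V) : Finset (Finset V) :=
  K.filter fun τ => σ ∪ τ ∈ K

/-- The link of a simplex `σ` in `K` : all faces `τ` of the star disjoint from `σ`. -/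
def link (K : Finset (Finset V)) (σ : Finset V) : Finset (Finset V) :=
  K.filter fun τ => σ ∪ τ ∈ K ∧ σ ∩ τ = ∅

/-- The star of a simplex in a relative complex, `st_S(σ) = st_K(σ) \ st_L(σ)`. -/
def RelCplx.starR (S : RelCplx V) (σ : Finset V) : RelCplx V :=
  ⟨star S.K σ, star S.L σ⟩

/-- The link of a simplex in a relative complex, `lk_S(σ) = lk_K(σ) \ lk_L(σ)`. -/
def RelCplx.linkR (S : RelCplx V) (σ : Finset V) : RelCplx V :=
  ⟨link S.K σ, link S.L σ⟩

/-- The boundary complex of a simplex: all its proper faces (including `∅`). -/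
def boundary (σ : Finset V) : Finset (Finset V) := σ.powerset.erase σ

/-- First barycentric subdivision: the faces are the (possibly empty) flags
`∅ ≠ σ₀ ⊊ σ₁ ⊊ ... ⊊ σ_q` of nonempty faces of `K`, a nonempty face `σ` of `K`
becoming the vertex `σ̂ = σ`. By convention `sd ∅ = ∅`. -/
def sd (K : Finset (Finset V)) : Finset (Finset (Finset V)) :=
  if K = ∅ then ∅ else
    (K.erase ∅).powerset.filter fun c => ∀ a ∈ c, ∀ b ∈ c, a ⊆ b ∨ b ⊆ a

/-- First barycentric subdivision of a relative complex: `sd (K \ L) = sd K \ sd L`. -/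
def RelCplx.sdR (S : RelCplx V) : RelCplx (Finset V) := ⟨sd S.K, sd S.L⟩

/-- An (absolute) simplicial complex seen as a relative one. -/
def toRel (K : Finset (Finset V)) : RelCplx V := ⟨K, ∅⟩

/-- The vertex support of a relative complex. -/
def suppK (S : RelCplx V) : Finset V := S.K.sup id

/-- The ridges (codimension one faces) of a simplex. -/
def ridges (σ : Finset V) : Finset (Finset V) := σ.image fun v => σ.erase v

/-- The subcomplex of the simplex `σ` consisting of the faces contained in some
member of `R`. -/
def below (σ : Finset V) (R : Finset (Finset V)) : Finset (Finset V) :=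
  σ.powerset.filter fun τ => ∃ ρ ∈ R, τ ⊆ ρ

/-- The restriction set of the basic tile `σ \ R`: the face spanned by the
vertices opposite to the missing ridges `R`. -/
def restSet (σ : Finset V) (R : Finset (Finset V)) : Finset V :=
  σ.filter fun v => σ.erase v ∈ R

/-- A basic tile of dimension `n` and order `k`: an `n`-simplex deprived of `k`
of its ridges (together with all the faces contained in them). -/
def IsBasicTile (S : RelCplx V) (n k : ℕ) : Prop :=
  ∃ σ : Finset V, σ.card = n + 1 ∧ S.K = σ.powerset ∧
    ∃ R ⊆ ridges σ, R.card = k ∧ S.L = below σ R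

/-- A Morse tile of dimension `n` and order `k`: a basic tile, possibly further
deprived of a unique face of higher codimension (its Morse face). -/
def IsMorseTile (S : RelCplx V) (n k : ℕ) : Prop :=
  ∃ σ : Finset V, σ.card = n + 1 ∧ S.K = σ.powerset ∧
    ∃ R ⊆ ridges σ, R.card = k ∧
      (S.L = below σ R ∨
        ∃ μ ⊆ σ, μ ∉ below σ R ∧ μ.card + 2 ≤ σ.card ∧
          S.L = below σ R ∪ below σ {μ})

/-- A critical tile of dimension `n` and index `k`: either a closed simplex
(index `0`), or a basic tile of order `k` deprived of its restriction set
(this includes the dotted simplex for `k = 0` and the open simplex for `k = n`). -/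
def IsCriticalTile (S : RelCplx V) (n k : ℕ) : Prop :=
  ∃ σ : Finset V, σ.card = n + 1 ∧ S.K = σ.powerset ∧
    ((k = 0 ∧ S.L = ∅) ∨
      (k ≤ n ∧ ∃ R ⊆ ridges σ, R.card = k ∧
        S.L = below σ R ∪ below σ {restSet σ R}))

/-- A closed simplex, as a tile. -/
def IsClosedSimplexTile (S : RelCplx V) : Prop :=
  ∃ σ : Finset V, S.K = σ.powerset ∧ S.L = ∅

/-- An open simplex, as a tile: deprived of its whole boundary, incl. the empty face. -/
def IsOpenSimplexTile (S : RelCplx V) : Prop :=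
  ∃ σ : Finset V, σ ≠ ∅ ∧ S.K = σ.powerset ∧ S.L = σ.powerset.erase σ

/-- The closed simplex on vertex set `σ`, as a relative complex. -/
def closedT (σ : Finset V) : RelCplx V := ⟨σ.powerset, ∅⟩

/-- The open simplex on vertex set `σ`. -/
def openT (σ : Finset V) : RelCplx V := ⟨σ.powerset, σ.powerset.erase σ⟩

/-- The closed simplex deprived of its empty face, `σ̇` (the neutral tile when
`σ = ∅`, so that empty factors may be dropped from joins). -/
def dotT (σ : Finset V) : RelCplx V := ⟨σ.powerset, if σ = ∅ then ∅ else {∅}⟩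

/-- The Morse tile `σ * θ̊ * τ̇`. -/
def splitTile (σ θ τ : Finset V) : RelCplx V :=
  (closedT σ).join ((openT θ).join (dotT τ))

/-- A tiling of a relative simplicial complex by `N` relative facets: the tiles
are relative simplices whose underlying simplices are facets, and their faces
partition the faces of `S`. -/
structure Tiling (S : RelCplx W) (N : ℕ) where
  tile : Fin N → RelCplx W
  isFacet : ∀ i, ∃ σ ∈ S.K, (∀ τ ∈ S.K, σ ⊆ τ → τ = σ) ∧ (tile i).K = σ.powerset
  subL : ∀ i, (tile i).L ⊆ (tile i).K
  disj : ∀ i j, i ≠ j → Disjoint (tile i).faces (tile j).faces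
  cover : (Finset.univ : Finset (Fin N)).biUnion (fun i => (tile i).faces) = S.faces

/-- The union of the faces of the first `p` tiles of a tiling. -/
def Tiling.prefixFaces {S : RelCplx W} {N : ℕ} (T : Tiling S N) (p : ℕ) :
    Finset (Finset W) :=
  (Finset.univ.filter fun i : Fin N => (i : ℕ) < p).biUnion fun i => (T.tile i).faces

/-- A tiling is a shelling when each of the sets of faces of `S_p = K_p \ L`
is a relative subcomplex, i.e. `L ∪ (tiles of index < p)` is a complex. -/
def Tiling.IsShelling {S : RelCplx W} {N : ℕ} (T : Tiling S N) : Prop :=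
  ∀ p ≤ N, IsComplex (S.L ∪ T.prefixFaces p)

/-- A (shelled) tiling begins with a set `F` of faces when some initial segment
of its tiles partitions exactly `F`. -/
def Tiling.BeginsWith {S : RelCplx W} {N : ℕ} (T : Tiling S N)
    (F : Finset (Finset W)) : Prop :=
  ∃ p ≤ N, T.prefixFaces p = F

/-- A Morse tiling: all tiles are Morse tiles. -/
def Tiling.IsMorse {S : RelCplx W} {N : ℕ} (T : Tiling S N) : Prop :=
  ∀ i, ∃ n k, IsMorseTile (T.tile i) n k

/-- An h-tiling: all tiles are basic or critical tiles. -/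
def Tiling.IsH {S : RelCplx W} {N : ℕ} (T : Tiling S N) : Prop :=
  ∀ i, (∃ n k, IsBasicTile (T.tile i) n k) ∨ (∃ n k, IsCriticalTile (T.tile i) n k)

/-- `f` induces a simplicial isomorphism from `A` onto `B` (both viewed through
their collections of faces). -/
def IsSimplicialIso (f : V → W) (A : Finset (Finset V)) (B : Finset (Finset W)) : Prop :=
  Set.BijOn (fun σ : Finset V => σ.image f) ↑A ↑B

/-- `f` induces an isomorphism of relative simplicial complexes. -/
def IsRelIso (f : V → W) (S : RelCplx V) (S' : RelCplx W) : Prop :=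
  Set.BijOn (fun σ : Finset V => σ.image f) ↑S.K ↑S'.K ∧
    Set.BijOn (fun σ : Finset V => σ.image f) ↑S.L ↑S'.L

/-- The first derived neighborhood `N(L, K)` of a subcomplex `L` in `K` : the union
of the stars in `sd K` of the vertices of `L`. -/
def derivedNbhd (L K : Finset (Finset V)) : Finset (Finset (Finset V)) :=
  (L.filter fun s => s.card = 1).biUnion fun s => star (sd K) {s}

/-- The faces of the derived neighborhood `N(T, S)` of a tile `T` in a relative
complex `S`: the union of the relative stars in `sd S` of the vertices of `T`. -/
def relDerivedNbhd (T S : RelCplx V) : Finset (Finset (Finset V)) :=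
  ((suppK T).biUnion fun v => ((S.sdR).starR {({v} : Finset V)}).faces) ∩ (S.sdR).faces

/-- A discrete Morse function on the finite simplicial complex `K`. -/
def IsDiscreteMorse (K : Finset (Finset V)) (f : Finset V → ℝ) : Prop :=
  ∀ σ ∈ K, σ ≠ ∅ →
    (K.filter fun τ => σ ⊂ τ ∧ f τ ≤ f σ).card ≤ 1 ∧
    (K.filter fun θ => θ ≠ ∅ ∧ θ ⊂ σ ∧ f σ ≤ f θ).card ≤ 1

/-- A critical face of a discrete Morse function. -/
def IsCriticalFace (K : Finset (Finset V)) (f : Finset V → ℝ) (σ : Finset V) : Prop :=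
  σ ∈ K ∧ σ ≠ ∅ ∧ (∀ τ ∈ K, σ ⊂ τ → f σ < f τ) ∧
    ∀ θ ∈ K, θ ≠ ∅ → θ ⊂ σ → f θ < f σ

/-- An elementary collapse: removal of a facet `τ` together with a ridge `θ` of it
contained in no other facet. -/
def ElementaryCollapse (K K' : Finset (Finset V)) : Prop :=
  ∃ τ ∈ K, ∃ θ ∈ K, θ ⊆ τ ∧ τ.card = θ.card + 1 ∧
    (∀ ρ ∈ K, τ ⊆ ρ → ρ = τ) ∧
    (∀ ρ ∈ K, θ ⊆ ρ → ρ = θ ∨ ρ = τ) ∧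
    K' = (K.erase τ).erase θ

/-- A finite simplicial complex is collapsible when some finite sequence of
elementary collapses reduces it to a single vertex. -/
def Collapsible (K : Finset (Finset V)) : Prop :=
  ∃ v : V, Relation.ReflTransGen ElementaryCollapse K {∅, {v}}

section MorseAux

open List Finset

set_option linter.unusedSectionVars false
variable {ℓ ℓ' : List V} {k m : ℕ} {s d : Finset V}

/-- The set of the first `k` letters of a word. -/
def pset (ℓ : List V) (k : ℕ) : Finset V := (ℓ.take k).toFinset

/-- The full flag (chain of prefix sets) associated to a word. -/
def chF (ℓ : List V) : Finset (Finset V) :=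
  (Finset.range ℓ.length).image fun k => pset ℓ (k + 1)

/-- The initial subflag of length `m` of the full flag of a word. -/
def segF (ℓ : List V) (m : ℕ) : Finset (Finset V) :=
  (Finset.range m).image fun k => pset ℓ (k + 1)

lemma pset_card (h : ℓ.Nodup) (hk : k ≤ ℓ.length) : (pset ℓ k).card = k := by
  rw [pset, List.toFinset_card_of_nodup ((List.take_sublist _ _).nodup h)]
  simp [hk]

lemma pset_mono (hkm : k ≤ m) : pset ℓ k ⊆ pset ℓ m := by
  intro x hx
  simp only [pset, List.mem_toFinset] at hx ⊢
  have : ℓ.take k = (ℓ.take m).take k := by rw [List.take_take, Nat.min_eq_left hkm]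
  rw [this] at hx
  exact List.take_subset _ _ hx

lemma mem_pset {x : V} : x ∈ pset ℓ k ↔ ∃ j, ∃ h : j < ℓ.length, j < k ∧ ℓ[j] = x := by
  simp only [pset, List.mem_toFinset, List.mem_iff_getElem, List.length_take]
  constructor
  · rintro ⟨j, hj, rfl⟩
    have hj0 : j < (ℓ.take k).length := by simpa using hj
    have hj' : j < ℓ.length := by simp at hj; omega
    refine ⟨j, hj', by simp at hj; omega, ?_⟩
    rw [← List.getElem_take (xs := ℓ) (h := hj0)]
  · rintro ⟨j, hj, hjk, rfl⟩
    have hj0 : j < (ℓ.take k).length := by simp; omega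
    exact ⟨j, by simpa using hj0, by rw [List.getElem_take]⟩

lemma pset_subset : pset ℓ k ⊆ ℓ.toFinset := by
  intro x hx; simp only [pset, List.mem_toFinset] at hx ⊢; exact List.take_subset _ _ hx

lemma pset_length : pset ℓ ℓ.length = ℓ.toFinset := by
  rw [pset, List.take_length]

lemma mem_segF : s ∈ segF ℓ m ↔ ∃ j < m, s = pset ℓ (j + 1) := by
  simp [segF, eq_comm]

lemma mem_chF : s ∈ chF ℓ ↔ ∃ j < ℓ.length, s = pset ℓ (j + 1) := by
  simp [chF, eq_comm]

lemma chF_eq_segF : chF ℓ = segF ℓ ℓ.length := rfl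

lemma segF_mono (hkm : k ≤ m) : segF ℓ k ⊆ segF ℓ m := by
  intro s hs; rw [mem_segF] at hs ⊢; obtain ⟨j, hj, rfl⟩ := hs; exact ⟨j, lt_of_lt_of_le hj hkm, rfl⟩

lemma segF_subset_chF (hm : m ≤ ℓ.length) : segF ℓ m ⊆ chF ℓ := by
  rw [chF_eq_segF]; exact segF_mono hm

lemma pset_mem_chF (h1 : 1 ≤ k) (hk : k ≤ ℓ.length) : pset ℓ k ∈ chF ℓ := by
  rw [mem_chF]; exact ⟨k - 1, by omega, by congr 1; omega⟩

lemma pset_mem_segF (h1 : 1 ≤ k) (hk : k ≤ m) : pset ℓ k ∈ segF ℓ m := by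
  rw [mem_segF]; exact ⟨k - 1, by omega, by congr 1; omega⟩

lemma card_eq_of_mem_chF (h : ℓ.Nodup) (hs : s ∈ chF ℓ) :
    s = pset ℓ s.card ∧ 1 ≤ s.card ∧ s.card ≤ ℓ.length := by
  rw [mem_chF] at hs
  obtain ⟨j, hj, rfl⟩ := hs
  rw [pset_card h (by omega)]
  exact ⟨rfl, by omega, by omega⟩

lemma mem_segF_of_card (h : ℓ.Nodup) (hs : s ∈ chF ℓ) (hc : s.card ≤ m) : s ∈ segF ℓ m := by
  obtain ⟨h1, h2, h3⟩ := card_eq_of_mem_chF h hs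
  rw [h1]; exact pset_mem_segF h2 hc

lemma segF_card_le (h : ℓ.Nodup) (hm : m ≤ ℓ.length) (hs : s ∈ segF ℓ m) : s.card ≤ m := by
  rw [mem_segF] at hs; obtain ⟨j, hj, rfl⟩ := hs
  rw [pset_card h (by omega)]; omega

lemma nonempty_of_mem_chF (h : ℓ.Nodup) (hs : s ∈ chF ℓ) : s ≠ ∅ := by
  obtain ⟨_, h2, _⟩ := card_eq_of_mem_chF h hs
  intro he; rw [he] at h2; simp at h2

lemma subset_of_mem_chF (hs : s ∈ chF ℓ) : s ⊆ ℓ.toFinset := by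
  rw [mem_chF] at hs; obtain ⟨j, hj, rfl⟩ := hs; exact pset_subset

lemma chF_chain (hs : s ∈ chF ℓ) (hd : d ∈ chF ℓ) : s ⊆ d ∨ d ⊆ s := by
  rw [mem_chF] at hs hd
  obtain ⟨j, hj, rfl⟩ := hs; obtain ⟨j', hj', rfl⟩ := hd
  rcases le_total (j+1) (j'+1) with h | h
  · exact Or.inl (pset_mono h)
  · exact Or.inr (pset_mono h)

lemma segF_subset_pset (hs : s ∈ segF ℓ m) : s ⊆ pset ℓ m := by
  rw [mem_segF] at hs; obtain ⟨j, hj, rfl⟩ := hs; exact pset_mono (by omega)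

lemma chF_card (h : ℓ.Nodup) : (chF ℓ).card = ℓ.length := by
  rw [chF, Finset.card_image_of_injOn, Finset.card_range]
  intro a ha b hb hab
  simp only [Finset.mem_coe, Finset.mem_range] at ha hb
  have := congrArg Finset.card hab
  rw [pset_card h (by omega), pset_card h (by omega)] at this
  omega

lemma segF_card (h : ℓ.Nodup) (hm : m ≤ ℓ.length) : (segF ℓ m).card = m := by
  rw [segF, Finset.card_image_of_injOn, Finset.card_range]
  intro a ha b hb hab
  simp only [Finset.mem_coe, Finset.mem_range] at ha hb
  have := congrArg Finset.card hab
  rw [pset_card h (by omega), pset_card h (by omega)] at this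
  omega

lemma segF_erase_top (h : ℓ.Nodup) (hl : 1 ≤ ℓ.length) :
    segF ℓ (ℓ.length - 1) = (chF ℓ).erase ℓ.toFinset := by
  ext s
  simp only [Finset.mem_erase]
  constructor
  · intro hs
    have h1 := segF_subset_chF (by omega) hs
    refine ⟨?_, h1⟩
    intro he
    have := segF_card_le h (by omega) hs
    rw [he] at this
    have h2 : ℓ.toFinset.card = ℓ.length := List.toFinset_card_of_nodup h
    omega
  · rintro ⟨hne, hs⟩
    obtain ⟨h1, h2, h3⟩ := card_eq_of_mem_chF h hs
    refine mem_segF_of_card h hs ?_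
    rcases Nat.lt_or_ge s.card ℓ.length with hc | hc
    · omega
    · exfalso; apply hne
      have : s.card = ℓ.length := by omega
      rw [h1, this, pset_length]


lemma mem_sd {K c : Finset (Finset V)} :
    c ∈ sd K ↔ K ≠ ∅ ∧ (∀ s ∈ c, s ∈ K ∧ s ≠ ∅) ∧ (∀ a ∈ c, ∀ b ∈ c, a ⊆ b ∨ b ⊆ a) := by
  rw [sd]
  split_ifs with h
  · simp [h]
  · rw [Finset.mem_filter, Finset.mem_powerset]
    constructor
    · rintro ⟨h1, h2⟩
      refine ⟨h, fun s hs => ?_, h2⟩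
      have := h1 hs; rw [Finset.mem_erase] at this; exact ⟨this.2, this.1⟩
    · rintro ⟨-, h1, h2⟩
      refine ⟨fun s hs => ?_, h2⟩
      rw [Finset.mem_erase]; exact ⟨(h1 s hs).2, (h1 s hs).1⟩

lemma sd_down {K c d : Finset (Finset V)} (hd : d ⊆ c) (hc : c ∈ sd K) : d ∈ sd K := by
  rw [mem_sd] at hc ⊢
  exact ⟨hc.1, fun s hs => hc.2.1 s (hd hs), fun a ha b hb => hc.2.2 a (hd ha) b (hd hb)⟩

lemma empty_mem_sd {K : Finset (Finset V)} (h : K ≠ ∅) : (∅ : Finset (Finset V)) ∈ sd K := by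
  rw [mem_sd]; simp [h]

lemma ne_empty_of_mem_sd {K c : Finset (Finset V)} (h : c ∈ sd K) : K ≠ ∅ := (mem_sd.1 h).1

lemma sd_mono {K L : Finset (Finset V)} (h : L ⊆ K) : sd L ⊆ sd K := by
  intro c hc
  rw [mem_sd] at hc ⊢
  refine ⟨?_, fun s hs => ⟨h (hc.2.1 s hs).1, (hc.2.1 s hs).2⟩, hc.2.2⟩
  intro hK; apply hc.1; rw [hK] at h; exact Finset.subset_empty.1 h

/-- The facets of `K` not lying in `L`. -/
def Fcts (S : RelCplx V) : Finset (Finset V) :=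
  S.K.filter fun τ => τ ∉ S.L ∧ ∀ τ' ∈ S.K, τ ⊆ τ' → τ' = τ

lemma mem_Fcts {S : RelCplx V} {τ : Finset V} :
    τ ∈ Fcts S ↔ τ ∈ S.K ∧ τ ∉ S.L ∧ ∀ τ' ∈ S.K, τ ⊆ τ' → τ' = τ := by
  simp [Fcts]

lemma exists_facet {S : RelCplx V} (hS : S.IsValid) {s : Finset V} (hs : s ∈ S.K)
    (hsL : s ∉ S.L) : ∃ τ ∈ Fcts S, s ⊆ τ := by
  obtain ⟨τ, hτ, hmax⟩ := (S.K.filter fun t => s ⊆ t).exists_max_image Finset.card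
    ⟨s, by simp [hs]⟩
  rw [Finset.mem_filter] at hτ
  refine ⟨τ, mem_Fcts.2 ⟨hτ.1, ?_, ?_⟩, hτ.2⟩
  · intro hτL; exact hsL (hS.2.1 τ hτL s hτ.2)
  · intro τ' hτ' hsub
    have hτ'm : τ' ∈ S.K.filter fun t => s ⊆ t := by
      rw [Finset.mem_filter]; exact ⟨hτ', hτ.2.trans hsub⟩
    exact (Finset.eq_of_subset_of_card_le hsub (hmax τ' hτ'm)).symm

lemma chain_max {d : Finset (Finset V)} (hne : d.Nonempty)
    (hch : ∀ a ∈ d, ∀ b ∈ d, a ⊆ b ∨ b ⊆ a) : ∃ s ∈ d, ∀ t ∈ d, t ⊆ s := by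
  obtain ⟨s, hs, hmax⟩ := d.exists_max_image Finset.card hne
  refine ⟨s, hs, fun t ht => ?_⟩
  rcases hch t ht s hs with h | h
  · exact h
  · rw [Finset.eq_of_subset_of_card_le h (hmax t ht)]

lemma pset_append {ℓ₁ ℓ₂ : List V} {k : ℕ} (h : k ≤ ℓ₁.length) :
    pset (ℓ₁ ++ ℓ₂) k = pset ℓ₁ k := by
  simp [pset, List.take_append, Nat.sub_eq_zero_of_le h]

lemma chF_append_left {ℓ₁ ℓ₂ : List V} : chF ℓ₁ ⊆ chF (ℓ₁ ++ ℓ₂) := by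
  intro s hs
  rw [mem_chF] at hs ⊢
  obtain ⟨j, hj, rfl⟩ := hs
  refine ⟨j, by simp; omega, (pset_append (by omega)).symm⟩

lemma toFinset_mem_chF_append {ℓ₁ ℓ₂ : List V} (h : ℓ₁ ≠ []) :
    ℓ₁.toFinset ∈ chF (ℓ₁ ++ ℓ₂) := by
  have hl : 1 ≤ ℓ₁.length := List.length_pos_iff.2 h
  rw [mem_chF]
  refine ⟨ℓ₁.length - 1, by simp; omega, ?_⟩
  rw [show ℓ₁.length - 1 + 1 = ℓ₁.length by omega, pset_append le_rfl, pset_length]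

lemma chainExtend : ∀ (n : ℕ) (τ : Finset V) (d : Finset (Finset V)), d.card = n →
    (∀ s ∈ d, s ⊆ τ ∧ s ≠ ∅) → (∀ a ∈ d, ∀ b ∈ d, a ⊆ b ∨ b ⊆ a) →
    ∃ ℓ : List V, ℓ.Nodup ∧ ℓ.toFinset = τ ∧ ∀ s ∈ d, s ∈ chF ℓ := by
  intro n
  induction n using Nat.strong_induction_on with
  | _ n ih =>
    intro τ d hcard h1 h2
    rcases Finset.eq_empty_or_nonempty d with rfl | hne
    · exact ⟨τ.toList, Finset.nodup_toList τ, Finset.toList_toFinset τ, by simp⟩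
    · obtain ⟨s, hs, hmax⟩ := chain_max hne h2
      have hce : (d.erase s).card < n := by
        rw [Finset.card_erase_of_mem hs]
        have : 0 < d.card := Finset.card_pos.2 hne
        omega
      obtain ⟨ℓ₁, hn1, ht1, hc1⟩ := ih (d.erase s).card hce s (d.erase s) rfl
        (fun t ht => ⟨hmax t (Finset.mem_of_mem_erase ht), (h1 t (Finset.mem_of_mem_erase ht)).2⟩)
        (fun a ha b hb => h2 a (Finset.mem_of_mem_erase ha) b (Finset.mem_of_mem_erase hb))
      have hne1 : ℓ₁ ≠ [] := by
        intro h; apply (h1 s hs).2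
        rw [← ht1, h]; rfl
      refine ⟨ℓ₁ ++ (τ \ s).toList, ?_, ?_, ?_⟩
      · rw [List.nodup_append]
        refine ⟨hn1, Finset.nodup_toList _, fun a ha b hb => ?_⟩
        have has : a ∈ s := by rw [← ht1]; exact List.mem_toFinset.2 ha
        rw [Finset.mem_toList, Finset.mem_sdiff] at hb
        rintro rfl; exact hb.2 has
      · rw [List.toFinset_append, ht1, Finset.toList_toFinset]
        exact Finset.union_sdiff_of_subset (h1 s hs).1
      · intro t ht
        by_cases hts : t = s
        · subst hts; rw [← ht1]; exact toFinset_mem_chF_append hne1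
        · exact chF_append_left (hc1 t (Finset.mem_erase.2 ⟨hts, ht⟩))

lemma chF_mem_sd {S : RelCplx V} (hS : S.IsValid) {ℓ : List V} (hn : ℓ.Nodup)
    (hτ : ℓ.toFinset ∈ S.K) : chF ℓ ∈ sd S.K := by
  rw [mem_sd]
  refine ⟨?_, fun s hs => ⟨hS.1 _ hτ s (subset_of_mem_chF hs), nonempty_of_mem_chF hn hs⟩,
    fun a ha b hb => chF_chain ha hb⟩
  intro h; rw [h] at hτ; exact absurd hτ (Finset.notMem_empty _)

lemma chF_maximal {S : RelCplx V} {ℓ : List V} (hn : ℓ.Nodup)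
    (hτ : ℓ.toFinset ∈ Fcts S) {e : Finset (Finset V)} (he : e ∈ sd S.K)
    (hce : chF ℓ ⊆ e) : e = chF ℓ := by
  rw [mem_sd] at he
  apply Finset.Subset.antisymm _ hce
  intro ν hν
  obtain ⟨hνK, hνne⟩ := he.2.1 ν hν
  have hlen : (pset ℓ ℓ.length).card = ℓ.length := pset_card hn le_rfl
  -- largest k with pset ℓ k ⊆ ν
  have h0 : (0 : ℕ) ∈ (Finset.range (ℓ.length + 1)).filter fun k => pset ℓ k ⊆ ν := by
    rw [Finset.mem_filter]; exact ⟨by simp, by simp [pset]⟩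
  have hAne : ((Finset.range (ℓ.length + 1)).filter fun k => pset ℓ k ⊆ ν).Nonempty := ⟨0, h0⟩
  set jm := ((Finset.range (ℓ.length + 1)).filter fun k => pset ℓ k ⊆ ν).max' hAne with hjmdef
  have hjmem : jm ∈ (Finset.range (ℓ.length + 1)).filter fun k => pset ℓ k ⊆ ν :=
    Finset.max'_mem _ hAne
  rw [Finset.mem_filter, Finset.mem_range] at hjmem
  obtain ⟨hjlt, hjsub⟩ := hjmem
  rcases eq_or_lt_of_le (Nat.lt_succ_iff.1 hjlt) with hje | hjlt'
  · -- pset ℓ len ⊆ ν : ν = τ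
    rw [hje, pset_length] at hjsub
    have : ν = ℓ.toFinset := (mem_Fcts.1 hτ).2.2 ν hνK hjsub
    subst this
    have hlpos : ℓ ≠ [] := by
      intro h; apply hνne; rw [h]; rfl
    rw [← pset_length]
    exact pset_mem_chF (List.length_pos_iff.2 hlpos) le_rfl
  · -- jm < length
    have hnotsub : ¬ pset ℓ (jm + 1) ⊆ ν := by
      intro hsub
      have hmem : jm + 1 ∈ (Finset.range (ℓ.length + 1)).filter fun k => pset ℓ k ⊆ ν := by
        rw [Finset.mem_filter, Finset.mem_range]; exact ⟨by omega, hsub⟩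
      have := Finset.le_max' _ _ hmem
      omega
    have hcomp : ν ⊆ pset ℓ (jm + 1) := by
      have hmem : pset ℓ (jm + 1) ∈ e := hce (pset_mem_chF (by omega) (by omega))
      rcases he.2.2 ν hν _ hmem with h | h
      · exact h
      · exact absurd h hnotsub
    have hc1 : jm ≤ ν.card := by
      calc jm = (pset ℓ jm).card := (pset_card hn (by omega)).symm
        _ ≤ ν.card := Finset.card_le_card hjsub
    have hc2 : ν.card ≤ jm + 1 := by
      calc ν.card ≤ (pset ℓ (jm+1)).card := Finset.card_le_card hcomp
        _ = jm + 1 := pset_card hn (by omega)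
    rcases eq_or_lt_of_le hc1 with heq | hlt
    · have : pset ℓ jm = ν := Finset.eq_of_subset_of_card_le hjsub
        (by rw [pset_card hn (by omega)]; omega)
      rw [← this]
      have hjm1 : 1 ≤ jm := by
        by_contra h
        apply hνne
        have : jm = 0 := by omega
        rw [this] at hjsub hc2
        rw [← Finset.card_eq_zero]
        omega
      exact pset_mem_chF hjm1 (by omega)
    · have : ν = pset ℓ (jm + 1) := Finset.eq_of_subset_of_card_le hcomp
        (by rw [pset_card hn (by omega)]; omega)
      rw [this]
      exact pset_mem_chF (by omega) (by omega)

variable [LinearOrder V]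

lemma run_le {ℓ : List V} {v0 : V} : ∀ (q j : ℕ), j ≤ q → q < ℓ.length →
    (∀ k, j < k → k ≤ q → ℓ.getD (k-1) v0 ≤ ℓ.getD k v0) → ℓ.getD j v0 ≤ ℓ.getD q v0 := by
  intro q
  induction q with
  | zero => intro j hj _ _; interval_cases j; rfl
  | succ q ih =>
    intro j hj hq h
    rcases eq_or_lt_of_le hj with rfl | hj'
    · rfl
    · have h1 : ℓ.getD j v0 ≤ ℓ.getD q v0 :=
        ih j (by omega) (by omega) (fun k hk1 hk2 => h k hk1 (by omega))
      have h2 : ℓ.getD q v0 ≤ ℓ.getD (q+1) v0 := by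
        have := h (q+1) (by omega) le_rfl
        simpa using this
      exact h1.trans h2

lemma nodup_getElem_inj {ℓ : List V} (h : ℓ.Nodup) {a b : ℕ} (ha : a < ℓ.length)
    (hb : b < ℓ.length) (hab : ℓ[a] = ℓ[b]) : a = b := by
  rw [List.nodup_iff_injective_get] at h
  have : ℓ.get ⟨a, ha⟩ = ℓ.get ⟨b, hb⟩ := by simpa using hab
  have := h this
  simpa using congrArg Fin.val this

lemma lex_firstdiff {ℓ' ℓ : List V} (h : List.Lex (· < ·) ℓ' ℓ) :
    (∃ j, ∃ hj' : j < ℓ'.length, ∃ hj : j < ℓ.length,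
      ℓ'.take j = ℓ.take j ∧ ℓ'[j] < ℓ[j]) ∨ ℓ' <+: ℓ := by
  induction h with
  | nil => exact Or.inr (List.nil_prefix)
  | @rel a l₁ b l₂ hab => exact Or.inl ⟨0, by simp, by simp, by simp, by simpa⟩
  | @cons a l₁ l₂ hl ih =>
    rcases ih with ⟨j, hj', hj, htk, hlt⟩ | hpre
    · exact Or.inl ⟨j+1, by simpa using hj', by simpa using hj, by simp [htk], by simpa⟩
    · exact Or.inr (List.cons_prefix_cons.2 ⟨rfl, hpre⟩)

lemma el_lemma (v0 : V) {ℓ ℓ' : List V} (hn : ℓ.Nodup) (hn' : ℓ'.Nodup)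
    (ht : ℓ'.toFinset = ℓ.toFinset) (hlex : List.Lex (· < ·) ℓ' ℓ)
    {d : Finset (Finset V)} (hd : ∀ s ∈ d, s ∈ chF ℓ) (hd' : ∀ s ∈ d, s ∈ chF ℓ') :
    ∃ k, 1 ≤ k ∧ k < ℓ.length ∧ ℓ.getD k v0 < ℓ.getD (k-1) v0 ∧ pset ℓ k ∉ d := by
  have hlen : ℓ'.length = ℓ.length := by
    rw [← List.toFinset_card_of_nodup hn', ← List.toFinset_card_of_nodup hn, ht]
  rcases lex_firstdiff hlex with ⟨j, hj', hj, htk, hlt⟩ | hpre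
  · set w := ℓ'[j] with hw
    have hwmem : w ∈ ℓ.toFinset := by
      rw [← ht, List.mem_toFinset]
      exact List.mem_iff_getElem.2 ⟨j, hj', rfl⟩
    rw [List.mem_toFinset, List.mem_iff_getElem] at hwmem
    obtain ⟨q, hq, hqw⟩ := hwmem
    have hjq : j < q := by
      rcases lt_trichotomy j q with h | rfl | h
      · exact h
      · exact absurd (hqw ▸ hlt) (lt_irrefl _)
      · exfalso
        have hql : q < ℓ'.length := by omega
        have : ℓ'[q] = ℓ[q] := by
          have e1 : (ℓ'.take j)[q]'(by simp; omega) = ℓ'[q] := List.getElem_take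
          have e2 : (ℓ.take j)[q]'(by simp; omega) = ℓ[q] := List.getElem_take
          rw [← e1, ← e2]; congr 1
        have : ℓ'[q] = ℓ'[j] := by rw [this, hqw]
        have := nodup_getElem_inj hn' hql hj' this
        omega
    have hdesc : ∃ k, j < k ∧ k ≤ q ∧ ℓ.getD k v0 < ℓ.getD (k-1) v0 := by
      by_contra hcon
      push_neg at hcon
      have hrun := run_le (ℓ := ℓ) (v0 := v0) q j (by omega) hq
        (fun k hk1 hk2 => hcon k hk1 hk2)
      rw [List.getD_eq_getElem _ _ hj, List.getD_eq_getElem _ _ hq, hqw] at hrun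
      exact absurd (lt_of_le_of_lt hrun hlt) (lt_irrefl _)
    obtain ⟨k, hk1, hk2, hk3⟩ := hdesc
    refine ⟨k, by omega, by omega, hk3, ?_⟩
    intro hkd
    have hs := hd' _ hkd
    obtain ⟨he, hc1, hc2⟩ := card_eq_of_mem_chF hn' hs
    have hck : (pset ℓ k).card = k := pset_card hn (by omega)
    have hpp : pset ℓ k = pset ℓ' k := by rw [he, hck]
    have hwin : w ∈ pset ℓ' k := mem_pset.2 ⟨j, by omega, by omega, rfl⟩
    have hwout : w ∉ pset ℓ k := by
      rw [mem_pset]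
      rintro ⟨j', hj'2, hj'k, hj'w⟩
      have : j' = q := nodup_getElem_inj hn hj'2 hq (by rw [hj'w, hqw])
      omega
    rw [hpp] at hwout
    exact hwout hwin
  · have : ℓ' = ℓ := hpre.eq_of_length hlen
    subst this
    exact absurd hlex (by exact lt_irrefl ℓ' hlex |>.elim)

lemma lex_append (p : List V) {x y : V} (u w : List V) (h : x < y) :
    List.Lex (· < ·) (p ++ x :: u) (p ++ y :: w) := by
  induction p with
  | nil => exact List.Lex.rel h
  | cons c p ih => exact List.Lex.cons ih

lemma swap_word {ℓ : List V} (hn : ℓ.Nodup) (v0 : V) {k : ℕ} (h1 : 1 ≤ k) (hk : k < ℓ.length)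
    (hdesc : ℓ.getD k v0 < ℓ.getD (k-1) v0) :
    ∃ ℓs : List V, ℓs.Nodup ∧ ℓs.toFinset = ℓ.toFinset ∧ List.Lex (· < ·) ℓs ℓ ∧
      ℓs.length = ℓ.length ∧ (1 ≤ k - 1 → ℓs.take (k-1) = ℓ.take (k-1)) ∧
      ∀ s ∈ chF ℓ, s ≠ pset ℓ k → s ∈ chF ℓs := by
  have hk1 : k - 1 < ℓ.length := by omega
  have hkk : k - 1 + 1 = k := by omega
  set a := ℓ[k-1] with ha
  set b := ℓ[k] with hb
  have hab : b < a := by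
    rw [List.getD_eq_getElem _ _ hk, List.getD_eq_getElem _ _ hk1] at hdesc
    exact hdesc
  set p := ℓ.take (k-1) with hp
  set r := ℓ.drop (k+1) with hr
  have hplen : p.length = k - 1 := by rw [hp, List.length_take]; omega
  have hsplit : ℓ = p ++ a :: b :: r := by
    have e1 : ℓ = ℓ.take (k-1) ++ ℓ.drop (k-1) := (List.take_append_drop _ _).symm
    have e2 : ℓ.drop (k-1) = a :: ℓ.drop k := by
      have := List.drop_eq_getElem_cons hk1 (l := ℓ)
      rwa [hkk] at this
    have e3 : ℓ.drop k = b :: ℓ.drop (k+1) := List.drop_eq_getElem_cons hk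
    rw [← hp, ← hr] at *
    rw [e1, e2, e3]
  set ℓs := p ++ b :: a :: r with hℓs
  have hperm : ℓs.Perm ℓ := by
    rw [hsplit, hℓs]
    exact List.Perm.append_left p (List.Perm.swap a b r)
  have hlens : ℓs.length = ℓ.length := hperm.length_eq
  refine ⟨ℓs, hperm.symm.nodup hn, List.toFinset_eq_of_perm _ _ hperm, ?_, hlens, ?_, ?_⟩
  · have := lex_append p (a :: r) (b :: r) hab
    rwa [← hsplit] at this
  · intro _
    rw [hℓs, hp, List.take_append]
    have : k - 1 - p.length = 0 := by omega
    rw [this, List.take_take]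
    simp [Nat.min_self, hplen, Nat.le_refl]
  · intro s hs hsne
    obtain ⟨he, hc1, hc2⟩ := card_eq_of_mem_chF hn hs
    set m := s.card with hm
    have hmk : m ≠ k := by
      intro h; apply hsne; rw [he, h]
    have hps : pset ℓs m = pset ℓ m := by
      rcases lt_or_gt_of_ne hmk with hlt | hgt
      · -- m ≤ k - 1
        have hm1 : m ≤ k - 1 := by omega
        have h1 : pset ℓs m = pset p m := by
          rw [hℓs]; exact pset_append (by omega)
        have h2 : pset ℓ m = pset p m := by
          conv_lhs => rw [hsplit]
          exact pset_append (by omega)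
        rw [h1, h2]
      · -- m ≥ k + 1 : take m ℓs ~ take m ℓ
        have hm1 : k + 1 ≤ m := by omega
        set j := m - (k+1) with hj
        have hjj : m - (k-1) = j + 2 := by omega
        have e1 : ℓs.take m = p ++ b :: a :: r.take j := by
          rw [hℓs, List.take_append]
          have : m - p.length = j + 2 := by omega
          rw [List.take_of_length_le (by omega), this]
          rfl
        have e2 : ℓ.take m = p ++ a :: b :: r.take j := by
          conv_lhs => rw [hsplit]
          rw [List.take_append]
          have : m - p.length = j + 2 := by omega
          rw [List.take_of_length_le (by omega), this]
          rfl
        have : (ℓs.take m).Perm (ℓ.take m) := by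
          rw [e1, e2]
          exact List.Perm.append_left p (List.Perm.swap a b _)
        rw [pset, pset, List.toFinset_eq_of_perm _ _ this]
    rw [he]
    rw [← hps]
    exact pset_mem_chF hc1 (by omega)

/-- The phase of a word: `0` if it starts with the distinguished vertex `v`. -/
def phase (v : V) (ℓ : List V) : ℕ := if ℓ.head? = some v then 0 else 1

/-- Index of the underlying facet in a fixed enumeration of the facets. -/
noncomputable def fidx (S : RelCplx V) (ℓ : List V) : ℕ :=
  (Fcts S).toList.idxOf ℓ.toFinset

/-- The global sorting key on words: phase, then facet index, then lex order. -/
noncomputable def gkey (S : RelCplx V) (v : V) (ℓ : List V) : ℕ ×ₗ (ℕ ×ₗ List V) :=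
  toLex (phase v ℓ, toLex (fidx S ℓ, ℓ))

/-- All orderings of the vertices of the facets of `S`. -/
noncomputable def Words (S : RelCplx V) : Finset (List V) :=
  (Fcts S).biUnion fun τ => τ.toList.permutations.toFinset

variable {S : RelCplx V} {v : V}

lemma mem_Words {ℓ : List V} : ℓ ∈ Words S ↔ ℓ.Nodup ∧ ℓ.toFinset ∈ Fcts S := by
  rw [Words, Finset.mem_biUnion]
  constructor
  · rintro ⟨τ, hτ, hℓ⟩
    rw [List.mem_toFinset, List.mem_permutations] at hℓ
    have h1 : ℓ.Nodup := hℓ.symm.nodup (Finset.nodup_toList τ)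
    have h2 : ℓ.toFinset = τ := by
      rw [List.toFinset_eq_of_perm _ _ hℓ, Finset.toList_toFinset]
    exact ⟨h1, h2 ▸ hτ⟩
  · rintro ⟨h1, h2⟩
    refine ⟨ℓ.toFinset, h2, ?_⟩
    rw [List.mem_toFinset, List.mem_permutations]
    exact List.perm_of_nodup_nodup_toFinset_eq h1 (Finset.nodup_toList _)
      (by rw [Finset.toList_toFinset])

lemma gkey_inj {a b : List V} (h : gkey S v a = gkey S v b) : a = b := by
  have := congrArg (fun z => (ofLex ((ofLex z).2)).2) h
  simpa [gkey] using this

/-- The global order on words. -/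
noncomputable def kle (S : RelCplx V) (v : V) (a b : List V) : Prop :=
  gkey S v a ≤ gkey S v b

noncomputable local instance : DecidableRel (kle S v) := fun _ _ => Classical.dec _

local instance : IsTrans (List V) (kle S v) := ⟨fun _ _ _ h1 h2 => le_trans h1 h2⟩

local instance : IsAntisymm (List V) (kle S v) := ⟨fun _ _ h1 h2 => gkey_inj (le_antisymm h1 h2)⟩

local instance : IsTotal (List V) (kle S v) := ⟨fun _ _ => le_total _ _⟩

/-- The sorted list of all words. -/
noncomputable def ws (S : RelCplx V) (v : V) : List (List V) := (Words S).sort (kle S v)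

/-- The `q`-th word. -/
noncomputable def wl (S : RelCplx V) (v : V) (q : ℕ) : List V := (ws S v).getD q []

lemma mem_ws {ℓ : List V} : ℓ ∈ ws S v ↔ ℓ ∈ Words S := Finset.mem_sort _

lemma ws_nodup : (ws S v).Nodup := Finset.sort_nodup _ _

lemma ws_sorted : (ws S v).Pairwise (kle S v) := Finset.pairwise_sort (s := Words S) (r := kle S v)

lemma wl_eq {q : ℕ} (hq : q < (ws S v).length) : wl S v q = (ws S v)[q] :=
  List.getD_eq_getElem _ _ hq

lemma wl_mem {q : ℕ} (hq : q < (ws S v).length) : wl S v q ∈ Words S := by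
  rw [wl_eq hq, ← mem_ws (S := S) (v := v)]
  exact List.getElem_mem _

lemma nodup_getElem_inj' {α : Type*} {ℓ : List α} (h : ℓ.Nodup) {a b : ℕ} (ha : a < ℓ.length)
    (hb : b < ℓ.length) (hab : ℓ[a] = ℓ[b]) : a = b := by
  rw [List.nodup_iff_injective_get] at h
  have : ℓ.get ⟨a, ha⟩ = ℓ.get ⟨b, hb⟩ := by simpa using hab
  have := h this
  simpa using congrArg Fin.val this

lemma wl_gkey_lt {i j : ℕ} (hij : i < j) (hj : j < (ws S v).length) :
    gkey S v (wl S v i) < gkey S v (wl S v j) := by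
  have hi : i < (ws S v).length := lt_trans hij hj
  have hle : kle S v ((ws S v).get ⟨i, hi⟩) ((ws S v).get ⟨j, hj⟩) :=
    ws_sorted.rel_get_of_lt (by simpa using hij)
  rw [List.get_eq_getElem, List.get_eq_getElem] at hle
  rw [wl_eq hi, wl_eq hj]
  rcases lt_or_eq_of_le hle with h | h
  · exact h
  · exact absurd (nodup_getElem_inj' ws_nodup hi hj (gkey_inj h)) (by omega)

lemma early_realize {p : ℕ} (hp : p < (ws S v).length) {ℓ'' : List V} (h'' : ℓ'' ∈ Words S)
    (hlt : gkey S v ℓ'' < gkey S v (wl S v p)) : ∃ q < p, wl S v q = ℓ'' := by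
  have hm : ℓ'' ∈ ws S v := mem_ws.2 h''
  obtain ⟨q, hq, hqe⟩ := List.mem_iff_getElem.1 hm
  refine ⟨q, ?_, by rw [wl_eq hq, hqe]⟩
  by_contra hqp
  push_neg at hqp
  rcases eq_or_lt_of_le hqp with rfl | hlt2
  · rw [wl_eq hq, hqe] at hlt
    exact absurd hlt (lt_irrefl _)
  · have := wl_gkey_lt hlt2 hq
    rw [wl_eq hq, hqe] at this
    exact absurd (hlt.trans this) (lt_irrefl _)

lemma phase_le_one (ℓ : List V) : phase v ℓ ≤ 1 := by
  rw [phase]; split_ifs <;> omega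

lemma phase_zero_iff {ℓ : List V} : phase v ℓ = 0 ↔ ℓ.head? = some v := by
  rw [phase]; split_ifs with h <;> simp [h]

lemma fidx_congr {a b : List V} (h : a.toFinset = b.toFinset) : fidx S a = fidx S b := by
  rw [fidx, fidx, h]

lemma fidx_inj {a b : List V} (ha : a.toFinset ∈ Fcts S) (hb : b.toFinset ∈ Fcts S)
    (h : fidx S a = fidx S b) : a.toFinset = b.toFinset := by
  rw [fidx, fidx] at h
  have ha' : (Fcts S).toList.idxOf a.toFinset < (Fcts S).toList.length :=
    List.idxOf_lt_length_iff.2 (Finset.mem_toList.2 ha)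
  have hb' : (Fcts S).toList.idxOf b.toFinset < (Fcts S).toList.length :=
    List.idxOf_lt_length_iff.2 (Finset.mem_toList.2 hb)
  have e1 := List.getElem_idxOf ha'
  have e2 := List.getElem_idxOf hb'
  rw [← e1, ← e2]
  congr 1

lemma gkey_lt_cases {a b : List V} (h : gkey S v a < gkey S v b) :
    phase v a < phase v b ∨ (phase v a = phase v b ∧
      (fidx S a < fidx S b ∨ (fidx S a = fidx S b ∧ List.Lex (· < ·) a b))) := by
  rw [gkey, gkey, Prod.Lex.lt_iff] at h
  rcases h with h | ⟨h1, h2⟩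
  · exact Or.inl h
  · rw [Prod.Lex.lt_iff] at h2
    rcases h2 with h2 | ⟨h2, h3⟩
    · exact Or.inr ⟨h1, Or.inl h2⟩
    · exact Or.inr ⟨h1, Or.inr ⟨h2, h3⟩⟩

lemma gkey_lt_of_phase {a b : List V} (h : phase v a < phase v b) :
    gkey S v a < gkey S v b := by
  rw [gkey, gkey, Prod.Lex.lt_iff]; exact Or.inl h

lemma gkey_lt_of_fidx {a b : List V} (hp : phase v a = phase v b) (h : fidx S a < fidx S b) :
    gkey S v a < gkey S v b := by
  rw [gkey, gkey, Prod.Lex.lt_iff]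
  exact Or.inr ⟨hp, Prod.Lex.lt_iff.2 (Or.inl h)⟩

lemma gkey_lt_of_lex {a b : List V} (hp : phase v a = phase v b) (hf : fidx S a = fidx S b)
    (h : List.Lex (· < ·) a b) : gkey S v a < gkey S v b := by
  rw [gkey, gkey, Prod.Lex.lt_iff]
  exact Or.inr ⟨hp, Prod.Lex.lt_iff.2 (Or.inr ⟨hf, h⟩)⟩

lemma pset_one {ℓ : List V} {x : V} (h : ℓ.head? = some x) : pset ℓ 1 = {x} := by
  cases ℓ with
  | nil => simp at h
  | cons y t =>
    simp only [List.head?_cons, Option.some.injEq] at h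
    subst h
    rfl

lemma phase_zero_of_mem {ℓ : List V} (hn : ℓ.Nodup) (h : ({v} : Finset V) ∈ chF ℓ) :
    phase v ℓ = 0 := by
  obtain ⟨he, hc1, hc2⟩ := card_eq_of_mem_chF hn h
  rw [Finset.card_singleton] at he hc2
  cases ℓ with
  | nil => simp at hc2
  | cons y t =>
    rw [pset_one (show (y :: t).head? = some y from rfl)] at he
    have hvy : v = y := by
      have := he ▸ Finset.mem_singleton_self v
      simpa using this
    rw [phase_zero_iff]
    simp [hvy]

lemma mem_of_phase_zero {ℓ : List V} (h : phase v ℓ = 0) (hlen : 1 ≤ ℓ.length) :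
    ({v} : Finset V) ∈ chF ℓ := by
  rw [phase_zero_iff] at h
  have : pset ℓ 1 = {v} := pset_one h
  rw [← this]
  exact pset_mem_chF le_rfl hlen

lemma gkey_lt_of_lex_samefacet (hvmin : ∀ w, v ≤ w) {a b : List V}
    (ht : a.toFinset = b.toFinset) (hlex : List.Lex (· < ·) a b) :
    gkey S v a < gkey S v b := by
  have hf : fidx S a = fidx S b := fidx_congr ht
  by_cases hb : phase v b = 0
  · have hb0 : b.head? = some v := phase_zero_iff.1 hb
    cases a with
    | nil =>
      exfalso
      cases b with
      | nil => cases hlex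
      | cons y t =>
        have : (y :: t).toFinset = (∅ : Finset V) := by rw [← ht]; rfl
        simp at this
    | cons x u =>
      cases b with
      | nil => cases hlex
      | cons y t =>
        have hyv : y = v := by simpa using hb0
        cases hlex with
        | rel hxy =>
          exfalso
          rw [hyv] at hxy
          exact absurd (lt_of_le_of_lt (hvmin x) hxy) (lt_irrefl v)
        | cons hlex' =>
          have h1 : phase v (x :: u) = 0 := phase_zero_iff.2 (by simp [hyv])
          have h2 : phase v (x :: t) = 0 := phase_zero_iff.2 (by simp [hyv])
          exact gkey_lt_of_lex (h1.trans h2.symm) hf (List.Lex.cons hlex')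
  · have hb1' : phase v b = 1 := le_antisymm (phase_le_one b) (Nat.one_le_iff_ne_zero.2 hb)
    rcases Nat.eq_zero_or_pos (phase v a) with ha0 | ha1
    · exact gkey_lt_of_phase (by omega)
    · have ha1' : phase v a = 1 := le_antisymm (phase_le_one a) ha1
      exact gkey_lt_of_lex (by omega) hf hlex

lemma lex_of_gkey_lt_samefacet (hvmin : ∀ w, v ≤ w) {a b : List V}
    (ht : a.toFinset = b.toFinset) (h : gkey S v a < gkey S v b) :
    List.Lex (· < ·) a b := by
  have hf : fidx S a = fidx S b := fidx_congr ht
  rcases gkey_lt_cases h with hp | ⟨hp, hc⟩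
  · have hb1 : phase v b = 1 := by have h0 := phase_le_one (v := v) b; omega
    have ha0 : phase v a = 0 := by omega
    have ha0' : a.head? = some v := phase_zero_iff.1 ha0
    cases a with
    | nil => simp at ha0'
    | cons x u =>
      have hxv : x = v := by simpa using ha0'
      cases b with
      | nil =>
        exfalso
        have : (x :: u).toFinset = (∅ : Finset V) := by rw [ht]; rfl
        simp at this
      | cons y t =>
        have hyv : y ≠ v := by
          intro hyv
          have : phase v (y :: t) = 0 := phase_zero_iff.2 (by simp [hyv])
          omega
        exact List.Lex.rel (by rw [hxv]; exact lt_of_le_of_ne (hvmin y) (Ne.symm hyv))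
  · rcases hc with hc | ⟨_, hc⟩
    · omega
    · exact hc

lemma mem_below {W : Type*} [DecidableEq W] {σ d : Finset W} {R : Finset (Finset W)} :
    d ∈ below σ R ↔ d ⊆ σ ∧ ∃ ρ ∈ R, d ⊆ ρ := by
  simp [below]

lemma ridge_of_card {W : Type*} [DecidableEq W] {σ d : Finset W} (hd : d ⊆ σ)
    (hc : d.card + 1 = σ.card) : d ∈ ridges σ := by
  have hne : (σ \ d).Nonempty := by
    rw [← Finset.card_pos, Finset.card_sdiff_of_subset hd]; omega
  obtain ⟨x, hx⟩ := hne
  rw [Finset.mem_sdiff] at hx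
  rw [ridges, Finset.mem_image]
  refine ⟨x, hx.1, ?_⟩
  have hsub : d ⊆ σ.erase x := fun y hy => Finset.mem_erase.2 ⟨fun h => hx.2 (h ▸ hy), hd hy⟩
  have hcard : (σ.erase x).card ≤ d.card := by
    rw [Finset.card_erase_of_mem hx.1]; omega
  exact (Finset.eq_of_subset_of_card_le hsub hcard).symm

lemma morse_of_cov {W : Type*} [DecidableEq W] (σ : Finset W) (hσ : σ ≠ ∅)
    (Y : Finset (Finset W)) (hdc : ∀ d ∈ Y, d ⊆ σ ∧ d ≠ σ)
    (hdown : ∀ d ∈ Y, ∀ d' ⊆ d, d' ∈ Y) (μ : Finset W) (hμY : Y.Nonempty → μ ∈ Y)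
    (hcov : ∀ d ∈ Y, (∃ ρ ∈ Y, ρ ∈ ridges σ ∧ d ⊆ ρ) ∨ d ⊆ μ) :
    ∃ n k, IsMorseTile (⟨σ.powerset, Y⟩ : RelCplx W) n k := by
  classical
  have hσc : 1 ≤ σ.card := Finset.card_pos.2 (Finset.nonempty_iff_ne_empty.2 hσ)
  refine ⟨σ.card - 1, ((ridges σ).filter (· ∈ Y)).card, σ, by omega, rfl,
    (ridges σ).filter (· ∈ Y), Finset.filter_subset _ _, rfl, ?_⟩
  rcases Finset.eq_empty_or_nonempty Y with rfl | hYne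
  · left
    have he : (ridges σ).filter (· ∈ (∅ : Finset (Finset W))) = ∅ := by simp
    rw [he]
    ext d; simp [below]
  · have hμ := hμY hYne
    by_cases hμb : μ ∈ below σ ((ridges σ).filter (· ∈ Y))
    · left
      ext d
      constructor
      · intro hd
        rcases hcov d hd with ⟨ρ, hρY, hρr, hdρ⟩ | hdμ
        · exact mem_below.2 ⟨(hdc d hd).1, ρ, Finset.mem_filter.2 ⟨hρr, hρY⟩, hdρ⟩
        · obtain ⟨-, ρ₀, hρ₀, hμρ₀⟩ := mem_below.1 hμb
          exact mem_below.2 ⟨(hdc d hd).1, ρ₀, hρ₀, hdμ.trans hμρ₀⟩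
      · intro hd
        obtain ⟨-, ρ, hρ, hdρ⟩ := mem_below.1 hd
        exact hdown ρ (Finset.mem_filter.1 hρ).2 d hdρ
    · right
      refine ⟨μ, (hdc μ hμ).1, hμb, ?_, ?_⟩
      · have hle : μ.card ≤ σ.card := Finset.card_le_card (hdc μ hμ).1
        have hne1 : μ.card ≠ σ.card := fun h =>
          (hdc μ hμ).2 (Finset.eq_of_subset_of_card_le (hdc μ hμ).1 (le_of_eq h.symm))
        have hne2 : μ.card + 1 ≠ σ.card := by
          intro h
          exact hμb (mem_below.2 ⟨(hdc μ hμ).1, μ,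
            Finset.mem_filter.2 ⟨ridge_of_card (hdc μ hμ).1 h, hμ⟩, Finset.Subset.refl μ⟩)
        omega
      · ext d
        constructor
        · intro hd
          rcases hcov d hd with ⟨ρ, hρY, hρr, hdρ⟩ | hdμ
          · exact Finset.mem_union.2 (Or.inl
              (mem_below.2 ⟨(hdc d hd).1, ρ, Finset.mem_filter.2 ⟨hρr, hρY⟩, hdρ⟩))
          · exact Finset.mem_union.2 (Or.inr
              (mem_below.2 ⟨(hdc d hd).1, μ, Finset.mem_singleton_self μ, hdμ⟩))
        · intro hd
          rcases Finset.mem_union.1 hd with hd | hd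
          · obtain ⟨-, ρ, hρ, hdρ⟩ := mem_below.1 hd
            exact hdown ρ (Finset.mem_filter.1 hρ).2 d hdρ
          · obtain ⟨-, ρ, hρ, hdρ⟩ := mem_below.1 hd
            rw [Finset.mem_singleton] at hρ
            subst hρ
            exact hdown ρ hμ d hdρ

/-- The already-covered region before step `p`. -/
noncomputable def Xp (S : RelCplx V) (v : V) (p : ℕ) : Finset (Finset (Finset V)) :=
  sd S.L ∪ (Finset.range p).biUnion fun q => (chF (wl S v q)).powerset

/-- The relative subcomplex removed from the `p`-th tile. -/
noncomputable def Yp (S : RelCplx V) (v : V) (p : ℕ) : Finset (Finset (Finset V)) :=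
  (chF (wl S v p)).powerset.filter (· ∈ Xp S v p)

/-- The `p`-th tile. -/
noncomputable def tl (S : RelCplx V) (v : V) (p : ℕ) : RelCplx (Finset V) :=
  ⟨(chF (wl S v p)).powerset, Yp S v p⟩

variable {S : RelCplx V} {v : V}

lemma mem_Xp {p : ℕ} {d : Finset (Finset V)} :
    d ∈ Xp S v p ↔ d ∈ sd S.L ∨ ∃ q < p, d ⊆ chF (wl S v q) := by
  simp [Xp, Finset.mem_union, Finset.mem_biUnion, Finset.mem_powerset, Finset.mem_range]

lemma Xp_down {p : ℕ} {d d' : Finset (Finset V)} (hd : d ∈ Xp S v p) (hd' : d' ⊆ d) :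
    d' ∈ Xp S v p := by
  rcases mem_Xp.1 hd with h | ⟨q, hq, h⟩
  · exact mem_Xp.2 (Or.inl (sd_down hd' h))
  · exact mem_Xp.2 (Or.inr ⟨q, hq, hd'.trans h⟩)

lemma Xp_of_early {p : ℕ} (hp : p < (ws S v).length) {ℓ'' : List V} (h'' : ℓ'' ∈ Words S)
    (hlt : gkey S v ℓ'' < gkey S v (wl S v p)) {d : Finset (Finset V)}
    (hd : d ⊆ chF ℓ'') : d ∈ Xp S v p := by
  obtain ⟨q, hq, hqe⟩ := early_realize hp h'' hlt
  exact mem_Xp.2 (Or.inr ⟨q, hq, by rw [hqe]; exact hd⟩)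

lemma facet_ne_empty (hv : {v} ∈ S.K) {τ : Finset V} (hτ : τ ∈ Fcts S) : τ ≠ ∅ := by
  rintro rfl
  have := (mem_Fcts.1 hτ).2.2 {v} hv (Finset.empty_subset _)
  simp at this

lemma wl_basic {p : ℕ} (hv : {v} ∈ S.K) (hp : p < (ws S v).length) :
    (wl S v p).Nodup ∧ (wl S v p).toFinset ∈ Fcts S ∧ 1 ≤ (wl S v p).length := by
  obtain ⟨h1, h2⟩ := mem_Words.1 (wl_mem hp)
  refine ⟨h1, h2, ?_⟩
  rw [← List.toFinset_card_of_nodup h1]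
  exact Finset.card_pos.2 (Finset.nonempty_iff_ne_empty.2 (facet_ne_empty hv h2))

lemma top_mem_chF {ℓ : List V} (h : ℓ ≠ []) : ℓ.toFinset ∈ chF ℓ := by
  rw [← pset_length]
  exact pset_mem_chF (List.length_pos_iff.2 h) le_rfl

lemma chain_not_mem_Xp (hv : {v} ∈ S.K) (hvmin : ∀ w, v ≤ w) {p : ℕ}
    (hp : p < (ws S v).length) : chF (wl S v p) ∉ Xp S v p := by
  obtain ⟨hn, hτ, hlen⟩ := wl_basic hv hp
  set ℓp := wl S v p with hℓp
  have hne : ℓp ≠ [] := by intro h; rw [h] at hlen; simp at hlen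
  have htop : ℓp.toFinset ∈ chF ℓp := top_mem_chF hne
  intro hmem
  rcases mem_Xp.1 hmem with h | ⟨q, hq, h⟩
  · have := (mem_sd.1 h).2.1 _ htop
    exact (mem_Fcts.1 hτ).2.1 this.1
  · set ℓ' := wl S v q with hℓ'
    obtain ⟨hn', hτ'⟩ := mem_Words.1 (wl_mem (lt_trans hq hp))
    have hsub : ℓp.toFinset ⊆ ℓ'.toFinset := subset_of_mem_chF (h htop)
    have hff : ℓ'.toFinset = ℓp.toFinset :=
      (mem_Fcts.1 hτ).2.2 _ (mem_Fcts.1 hτ').1 hsub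
    have hlen' : ℓ'.length = ℓp.length := by
      rw [← List.toFinset_card_of_nodup hn', ← List.toFinset_card_of_nodup hn, hff]
    have hceq : chF ℓp = chF ℓ' := by
      apply Finset.eq_of_subset_of_card_le h
      rw [chF_card hn', chF_card hn, hlen']
    have hkey : gkey S v ℓ' < gkey S v ℓp := wl_gkey_lt hq hp
    have hlex : List.Lex (· < ·) ℓ' ℓp := lex_of_gkey_lt_samefacet hvmin hff hkey
    obtain ⟨k, hk1, hk2, _, hknot⟩ := el_lemma v hn hn' hff hlex
      (d := chF ℓp) (fun s hs => hs) (fun s hs => by rw [← hceq]; exact hs)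
    exact hknot (pset_mem_chF hk1 (le_of_lt hk2))

lemma segF_zero {ℓ : List V} : segF ℓ 0 = ∅ := by simp [segF]

/-- The candidate Morse face of the `p`-th tile. -/
noncomputable def muF (S : RelCplx V) (v : V) (p : ℕ) : Finset (Finset V) :=
  if h : (((Finset.range ((wl S v p).length)).filter
      fun m => segF (wl S v p) m ∈ Xp S v p)).Nonempty
  then segF (wl S v p) ((((Finset.range ((wl S v p).length)).filter
      fun m => segF (wl S v p) m ∈ Xp S v p)).max' h)
  else ∅

lemma mu_capture {p m : ℕ} (hm : m < (wl S v p).length)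
    (hX : segF (wl S v p) m ∈ Xp S v p) : segF (wl S v p) m ⊆ muF S v p := by
  have hmem : m ∈ (Finset.range ((wl S v p).length)).filter
      fun m => segF (wl S v p) m ∈ Xp S v p := by
    rw [Finset.mem_filter, Finset.mem_range]; exact ⟨hm, hX⟩
  have hne : (((Finset.range ((wl S v p).length)).filter
      fun m => segF (wl S v p) m ∈ Xp S v p)).Nonempty := ⟨m, hmem⟩
  rw [muF, dif_pos hne]
  exact segF_mono (Finset.le_max' _ m hmem)

lemma mu_memY (hv : {v} ∈ S.K) {p : ℕ} (hp : p < (ws S v).length)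
    (hY : (Yp S v p).Nonempty) : muF S v p ∈ Yp S v p := by
  obtain ⟨hn, hτ, hlen⟩ := wl_basic hv hp
  obtain ⟨d, hd⟩ := hY
  rw [Yp, Finset.mem_filter] at hd
  have hemp : (∅ : Finset (Finset V)) ∈ Xp S v p := Xp_down hd.2 (Finset.empty_subset _)
  have h0 : (0 : ℕ) ∈ (Finset.range ((wl S v p).length)).filter
      fun m => segF (wl S v p) m ∈ Xp S v p := by
    rw [Finset.mem_filter, Finset.mem_range, segF_zero]
    exact ⟨by omega, hemp⟩
  have hne : (((Finset.range ((wl S v p).length)).filter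
      fun m => segF (wl S v p) m ∈ Xp S v p)).Nonempty := ⟨0, h0⟩
  rw [muF, dif_pos hne]
  have hmax := Finset.max'_mem _ hne
  rw [Finset.mem_filter, Finset.mem_range] at hmax
  rw [Yp, Finset.mem_filter, Finset.mem_powerset]
  exact ⟨segF_subset_chF (le_of_lt hmax.1), hmax.2⟩

lemma head?_eq_getElem_zero {ℓ : List V} (h : ℓ ≠ []) :
    ℓ.head? = some (ℓ[0]'(List.length_pos_iff.2 h)) := by
  cases ℓ with
  | nil => exact absurd rfl h
  | cons y t => rfl

lemma ridge_route (hv : {v} ∈ S.K) (hvmin : ∀ w, v ≤ w) {p : ℕ} (hp : p < (ws S v).length)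
    {k : ℕ} (h1 : 1 ≤ k) (hk : k < (wl S v p).length)
    (hdesc : (wl S v p).getD k v < (wl S v p).getD (k-1) v)
    {d : Finset (Finset V)} (hd : ∀ s ∈ d, s ∈ chF (wl S v p))
    (hknot : pset (wl S v p) k ∉ d) :
    ∃ ρ ∈ Yp S v p, ρ ∈ ridges (chF (wl S v p)) ∧ d ⊆ ρ := by
  obtain ⟨hn, hτ, hlen⟩ := wl_basic hv hp
  obtain ⟨ℓs, hsn, hst, hslex, hslen, -, hsch⟩ := swap_word hn v h1 hk hdesc
  have hsW : ℓs ∈ Words S := mem_Words.2 ⟨hsn, hst ▸ hτ⟩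
  have hskey : gkey S v ℓs < gkey S v (wl S v p) := gkey_lt_of_lex_samefacet hvmin hst hslex
  refine ⟨(chF (wl S v p)).erase (pset (wl S v p) k), ?_, ?_, ?_⟩
  · rw [Yp, Finset.mem_filter, Finset.mem_powerset]
    refine ⟨Finset.erase_subset _ _, Xp_of_early hp hsW hskey ?_⟩
    intro s hs
    rw [Finset.mem_erase] at hs
    exact hsch s hs.2 hs.1
  · rw [ridges, Finset.mem_image]
    exact ⟨pset (wl S v p) k, pset_mem_chF h1 (le_of_lt hk), rfl⟩
  · intro s hs
    rw [Finset.mem_erase]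
    exact ⟨fun h => hknot (h ▸ hs), hd s hs⟩

lemma seg_route (hS : S.IsValid) (hv : {v} ∈ S.K) {p q : ℕ} (hp : p < (ws S v).length)
    (hq : q < p) (hfidx : fidx S (wl S v q) < fidx S (wl S v p))
    (hff : (wl S v q).toFinset ≠ (wl S v p).toFinset)
    {d : Finset (Finset V)} (hdsub : d ⊆ chF (wl S v p)) (hdq : d ⊆ chF (wl S v q))
    (hdne : d.Nonempty) : d ⊆ muF S v p := by
  obtain ⟨hn, hτ, hlen⟩ := wl_basic hv hp
  obtain ⟨hn', hτ', hlen'⟩ := wl_basic hv (lt_trans hq hp)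
  set ℓp := wl S v p with hℓp
  set ℓ' := wl S v q with hℓ'
  set m := d.sup Finset.card with hm
  obtain ⟨s', hs', hsup⟩ := Finset.exists_mem_eq_sup d hdne Finset.card
  have hps : pset ℓp m = s' := by
    rw [hm, hsup]
    exact (card_eq_of_mem_chF hn (hdsub hs')).1.symm
  have hsτ' : s' ⊆ ℓ'.toFinset := subset_of_mem_chF (hdq hs')
  have hm1 : 1 ≤ m := by
    obtain ⟨he, hc1, hc2⟩ := card_eq_of_mem_chF hn (hdsub hs')
    rw [hm, hsup]; exact hc1
  have hmlt : m < ℓp.length := by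
    obtain ⟨he, hc1, hc2⟩ := card_eq_of_mem_chF hn (hdsub hs')
    rcases lt_or_eq_of_le hc2 with h' | h'
    · rw [hm, hsup]; exact h'
    · exfalso
      have hstop : s' = ℓp.toFinset := by rw [he, h', pset_length]
      have : ℓp.toFinset ⊆ ℓ'.toFinset := hstop ▸ hsτ'
      exact hff ((mem_Fcts.1 hτ).2.2 _ (mem_Fcts.1 hτ').1 this)
  have hdseg : d ⊆ segF ℓp m := fun s hs =>
    mem_segF_of_card hn (hdsub hs) (Finset.le_sup hs)
  -- extend the segment to a full chain of the other facet
  obtain ⟨ℓ'', hn'', ht'', hc''⟩ := chainExtend (segF ℓp m).card ℓ'.toFinset (segF ℓp m) rfl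
    (fun t ht => ⟨(segF_subset_pset ht).trans (hps ▸ hsτ'),
      nonempty_of_mem_chF hn (segF_subset_chF (le_of_lt hmlt) ht)⟩)
    (fun a ha b hb => chF_chain (segF_subset_chF (le_of_lt hmlt) ha)
      (segF_subset_chF (le_of_lt hmlt) hb))
  have hW'' : ℓ'' ∈ Words S := mem_Words.2 ⟨hn'', ht'' ▸ hτ'⟩
  have hf'' : fidx S ℓ'' = fidx S ℓ' := fidx_congr (by rw [ht''])
  have hsub'' : segF ℓp m ⊆ chF ℓ'' := fun t ht => hc'' t ht
  have hkey'' : gkey S v ℓ'' < gkey S v ℓp := by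
    by_cases hPp : phase v ℓp = 0
    · -- then {v} ∈ segF, so ℓ'' has phase 0 too
      have hv1 : pset ℓp 1 = {v} := pset_one (phase_zero_iff.1 hPp)
      have hvseg : ({v} : Finset V) ∈ segF ℓp m := hv1 ▸ pset_mem_segF le_rfl hm1
      have hP'' : phase v ℓ'' = 0 := phase_zero_of_mem hn'' (hsub'' hvseg)
      exact gkey_lt_of_fidx (by omega) (by omega)
    · have hPp1 : phase v ℓp = 1 := le_antisymm (phase_le_one _) (Nat.one_le_iff_ne_zero.2 hPp)
      rcases Nat.eq_zero_or_pos (phase v ℓ'') with h0 | h1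
      · exact gkey_lt_of_phase (by omega)
      · have h1' : phase v ℓ'' = 1 := le_antisymm (phase_le_one _) h1
        exact gkey_lt_of_fidx (by omega) (by omega)
  have hsegX : segF ℓp m ∈ Xp S v p := Xp_of_early hp hW'' hkey'' hsub''
  exact hdseg.trans (mu_capture hmlt hsegX)

lemma tile_morse (hS : S.IsValid) (hv : {v} ∈ S.K) (hvmin : ∀ w, v ≤ w) {p : ℕ}
    (hp : p < (ws S v).length) : ∃ n k, IsMorseTile (tl S v p) n k := by
  obtain ⟨hn, hτ, hlen⟩ := wl_basic hv hp
  set ℓp := wl S v p with hℓp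
  have hne : ℓp ≠ [] := by
    intro h; rw [h] at hlen; simp at hlen
  have hKne : chF ℓp ≠ ∅ := by
    intro h
    have := top_mem_chF hne
    rw [h] at this
    exact absurd this (Finset.notMem_empty _)
  have hnotX := chain_not_mem_Xp hv hvmin hp
  have hYmem : ∀ d ∈ Yp S v p, d ⊆ chF ℓp ∧ d ∈ Xp S v p := by
    intro d hd
    rw [Yp, Finset.mem_filter, Finset.mem_powerset] at hd
    exact hd
  apply morse_of_cov (chF ℓp) hKne (Yp S v p)
  · intro d hd
    obtain ⟨h1, h2⟩ := hYmem d hd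
    exact ⟨h1, fun h => hnotX (h ▸ h2)⟩
  · intro d hd d' hd'
    obtain ⟨h1, h2⟩ := hYmem d hd
    rw [Yp, Finset.mem_filter, Finset.mem_powerset]
    exact ⟨hd'.trans h1, Xp_down h2 hd'⟩
  · exact mu_memY hv hp
  · -- the covering property
    intro d hd
    obtain ⟨hdsub, hdX⟩ := hYmem d hd
    rcases mem_Xp.1 hdX with hL | ⟨q, hq, hdq⟩
    · -- d ∈ sd S.L
      right
      set m := d.sup Finset.card with hm
      have hsL : ∀ s ∈ d, s ∈ chF ℓp ∧ s ∈ S.L := fun s hs =>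
        ⟨hdsub hs, ((mem_sd.1 hL).2.1 s hs).1⟩
      have hLne : S.L ≠ ∅ := (mem_sd.1 hL).1
      have hmlt : m < ℓp.length := by
        rcases Finset.eq_empty_or_nonempty d with rfl | hdne
        · have : m = 0 := by rw [hm]; simp
          omega
        · obtain ⟨s', hs', hsup⟩ := Finset.exists_mem_eq_sup d hdne Finset.card
          rw [hm, hsup]
          obtain ⟨he, hc1, hc2⟩ := card_eq_of_mem_chF hn (hsL s' hs').1
          rcases lt_or_eq_of_le hc2 with h' | h'
          · exact h'
          · exfalso
            have : s' = ℓp.toFinset := by rw [he, h', pset_length]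
            exact (mem_Fcts.1 hτ).2.1 (hS.2.1 _ (this ▸ (hsL s' hs').2) _ (Finset.Subset.refl _))
      have hdseg : d ⊆ segF ℓp m := fun s hs =>
        mem_segF_of_card hn (hsL s hs).1 (Finset.le_sup hs)
      have hsegX : segF ℓp m ∈ Xp S v p := by
        apply mem_Xp.2 (Or.inl _)
        rw [mem_sd]
        refine ⟨hLne, fun t ht => ⟨?_,
          nonempty_of_mem_chF hn (segF_subset_chF (le_of_lt hmlt) ht)⟩,
          fun a ha b hb => chF_chain (segF_subset_chF (le_of_lt hmlt) ha)
            (segF_subset_chF (le_of_lt hmlt) hb)⟩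
        rcases Finset.eq_empty_or_nonempty d with rfl | hdne
        · exfalso
          have hm0 : m = 0 := by rw [hm]; simp
          rw [hm0, segF_zero] at ht
          exact absurd ht (Finset.notMem_empty _)
        · obtain ⟨s', hs', hsup⟩ := Finset.exists_mem_eq_sup d hdne Finset.card
          have hps : pset ℓp m = s' := by
            rw [hm, hsup]
            exact (card_eq_of_mem_chF hn (hsL s' hs').1).1.symm
          have hts : t ⊆ s' := hps ▸ segF_subset_pset ht
          exact hS.2.1 s' (hsL s' hs').2 t hts
      exact hdseg.trans (mu_capture hmlt hsegX)
    · -- d is contained in an earlier chain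
      obtain ⟨hn', hτ', hlen'⟩ := wl_basic hv (lt_trans hq hp)
      set ℓ' := wl S v q with hℓ'
      have hkey : gkey S v ℓ' < gkey S v ℓp := wl_gkey_lt hq hp
      by_cases hff : ℓ'.toFinset = ℓp.toFinset
      · -- same facet: EL lemma + swap
        left
        have hlex : List.Lex (· < ·) ℓ' ℓp := lex_of_gkey_lt_samefacet hvmin hff hkey
        obtain ⟨k, hk1, hk2, hdesc, hknot⟩ := el_lemma v hn hn' hff hlex
          (fun s hs => hdsub hs) (fun s hs => hdq hs)
        exact ridge_route hv hvmin hp hk1 hk2 hdesc (fun s hs => hdsub hs) hknot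
      · rcases Finset.eq_empty_or_nonempty d with rfl | hdne
        · right; exact Finset.empty_subset _
        · by_cases hP' : phase v ℓ' = 0
          · by_cases hPp : phase v ℓp = 0
            · -- both phase 0 : facet index route
              right
              have hfidx : fidx S ℓ' < fidx S ℓp := by
                rcases gkey_lt_cases hkey with hph | ⟨hph, hc⟩
                · omega
                · rcases hc with hf | ⟨hf, -⟩
                  · exact hf
                  · exact absurd (fidx_inj hτ' hτ hf) hff
              exact seg_route hS hv hp hq hfidx hff hdsub hdq hdne
            · -- ℓ' phase 0, ℓp phase 1 : ridge at the position of v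
              left
              obtain ⟨s₀, hs₀⟩ := hdne
              have hvd : ∀ s ∈ d, v ∈ s := by
                intro s hs
                obtain ⟨he, hc1, hc2⟩ := card_eq_of_mem_chF hn' (hdq hs)
                have h1 : pset ℓ' 1 = {v} := pset_one (phase_zero_iff.1 hP')
                have h2 : pset ℓ' 1 ⊆ pset ℓ' s.card := pset_mono hc1
                rw [h1] at h2
                rw [he]
                exact h2 (Finset.mem_singleton_self v)
              have hvτ : v ∈ ℓp.toFinset := subset_of_mem_chF (hdsub hs₀) (hvd s₀ hs₀)
              rw [List.mem_toFinset, List.mem_iff_getElem] at hvτ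
              obtain ⟨pos, hpos, hposv⟩ := hvτ
              have hpos1 : 1 ≤ pos := by
                rcases Nat.eq_zero_or_pos pos with rfl | h
                · exfalso
                  apply hPp
                  rw [phase_zero_iff, head?_eq_getElem_zero hne, hposv]
                · exact h
              have hdesc : ℓp.getD pos v < ℓp.getD (pos - 1) v := by
                have e1 : ℓp.getD pos v = v := by
                  rw [List.getD_eq_getElem _ _ hpos, hposv]
                have e2 : ℓp.getD (pos-1) v = ℓp[pos-1]'(by omega) :=
                  List.getD_eq_getElem _ _ (by omega)
                have hne2 : ℓp[pos-1]'(by omega) ≠ v := by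
                  intro h
                  have := nodup_getElem_inj' hn (show pos - 1 < ℓp.length by omega) hpos
                    (by rw [h, hposv])
                  omega
                rw [e1, e2]
                exact lt_of_le_of_ne (hvmin _) (Ne.symm hne2)
              have hknot : pset ℓp pos ∉ d := by
                intro hmem
                have hvp := hvd _ hmem
                rw [mem_pset] at hvp
                obtain ⟨j, hj, hjpos, hjv⟩ := hvp
                have : j = pos := nodup_getElem_inj' hn hj hpos (by rw [hjv, hposv])
                omega
              exact ridge_route hv hvmin hp hpos1 hpos hdesc (fun s hs => hdsub hs) hknot
          · -- phase ℓ' = 1, hence phase ℓp = 1 and facet index route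
            right
            have hP'1 : phase v ℓ' = 1 :=
              le_antisymm (phase_le_one _) (Nat.one_le_iff_ne_zero.2 hP')
            have hfidx : fidx S ℓ' < fidx S ℓp := by
              rcases gkey_lt_cases hkey with hph | ⟨hph, hc⟩
              · have := phase_le_one (v := v) ℓp; omega
              · rcases hc with hf | ⟨hf, -⟩
                · exact hf
                · exact absurd (fidx_inj hτ' hτ hf) hff
            exact seg_route hS hv hp hq hfidx hff hdsub hdq hdne

lemma mem_tl_faces {p : ℕ} {d : Finset (Finset V)} :
    d ∈ (tl S v p).faces ↔ d ⊆ chF (wl S v p) ∧ d ∉ Xp S v p := by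
  rw [RelCplx.faces, tl, Finset.mem_sdiff, Finset.mem_powerset, Yp, Finset.mem_filter,
    Finset.mem_powerset]
  constructor
  · rintro ⟨h1, h2⟩
    exact ⟨h1, fun hX => h2 ⟨h1, hX⟩⟩
  · rintro ⟨h1, h2⟩
    exact ⟨h1, fun hX => h2 hX.2⟩

lemma exists_min_tile {p : ℕ} {d : Finset (Finset V)} (hdL : d ∉ sd S.L)
    {q : ℕ} (hq : q < p) (hsub : d ⊆ chF (wl S v q)) :
    ∃ i : ℕ, i < p ∧ d ∈ (tl S v i).faces := by
  have hne : ((Finset.range p).filter fun i => d ⊆ chF (wl S v i)).Nonempty :=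
    ⟨q, by rw [Finset.mem_filter, Finset.mem_range]; exact ⟨hq, hsub⟩⟩
  set i := ((Finset.range p).filter fun i => d ⊆ chF (wl S v i)).min' hne with hidef
  have hmem := Finset.min'_mem _ hne
  rw [Finset.mem_filter, Finset.mem_range] at hmem
  refine ⟨i, hmem.1, mem_tl_faces.2 ⟨hmem.2, ?_⟩⟩
  intro hX
  rcases mem_Xp.1 hX with hL | ⟨q', hq', hsub'⟩
  · exact hdL hL
  · have : i ≤ q' := Finset.min'_le _ _
      (by rw [Finset.mem_filter, Finset.mem_range]; exact ⟨by omega, hsub'⟩)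
    omega

lemma exists_word_cover' (hS : S.IsValid) (hv : {v} ∈ S.K) {d : Finset (Finset V)}
    (hdK : d ∈ sd S.K) (hdL : d ∉ sd S.L) :
    ∃ ℓ ∈ Words S, d ⊆ chF ℓ := by
  obtain ⟨hKne, helts, hch⟩ := mem_sd.1 hdK
  rcases Finset.eq_empty_or_nonempty d with rfl | hdne
  · -- then S.L = ∅
    have hL : S.L = ∅ := by
      by_contra hLne
      exact hdL (empty_mem_sd hLne)
    obtain ⟨τ, hτ, -⟩ := exists_facet hS hv (by rw [hL]; exact Finset.notMem_empty _)
    refine ⟨τ.toList, mem_Words.2 ⟨Finset.nodup_toList τ, by rw [Finset.toList_toFinset]; exact hτ⟩,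
      Finset.empty_subset _⟩
  · obtain ⟨s', hs', hmax⟩ := chain_max hdne hch
    have hs'L : s' ∉ S.L := by
      by_cases hL : S.L = ∅
      · rw [hL]; exact Finset.notMem_empty _
      · -- some element of d is not in L
        have : ¬ ∀ s ∈ d, s ∈ S.L := by
          intro hall
          apply hdL
          rw [mem_sd]
          exact ⟨hL, fun s hs => ⟨hall s hs, (helts s hs).2⟩, hch⟩
        push_neg at this
        obtain ⟨s₀, hs₀, hs₀L⟩ := this
        intro hs'mem
        exact hs₀L (hS.2.1 s' hs'mem s₀ (hmax s₀ hs₀))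
    obtain ⟨τ, hτ, hsτ⟩ := exists_facet hS (helts s' hs').1 hs'L
    obtain ⟨ℓ, hn, ht, hc⟩ := chainExtend d.card τ d rfl
      (fun s hs => ⟨(hmax s hs).trans hsτ, (helts s hs).2⟩) hch
    exact ⟨ℓ, mem_Words.2 ⟨hn, ht ▸ hτ⟩, fun s hs => hc s hs⟩

/-- The Morse shelling of `sd S` as a tiling. -/
noncomputable def theTiling (hS : S.IsValid) (hv : {v} ∈ S.K) (hvmin : ∀ w, v ≤ w) :
    Tiling (S.sdR) ((ws S v).length) where
  tile i := tl S v i.1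
  isFacet i := by
    obtain ⟨hn, hτ, hlen⟩ := wl_basic hv i.2
    refine ⟨chF (wl S v i.1), chF_mem_sd hS hn (mem_Fcts.1 hτ).1, ?_, rfl⟩
    intro e he hsub
    exact chF_maximal hn hτ he hsub
  subL i := Finset.filter_subset _ _
  disj i j hij := by
    rw [Finset.disjoint_left]
    intro d hdi hdj
    rw [mem_tl_faces] at hdi hdj
    rcases lt_trichotomy i j with h | h | h
    · exact hdj.2 (mem_Xp.2 (Or.inr ⟨i.1, h, hdi.1⟩))
    · exact hij (Fin.ext (by omega))
    · exact hdi.2 (mem_Xp.2 (Or.inr ⟨j.1, h, hdj.1⟩))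
  cover := by
    ext d
    rw [Finset.mem_biUnion]
    constructor
    · rintro ⟨i, -, hd⟩
      rw [mem_tl_faces] at hd
      obtain ⟨hn, hτ, hlen⟩ := wl_basic hv i.2
      rw [RelCplx.sdR, RelCplx.faces, Finset.mem_sdiff]
      refine ⟨sd_down hd.1 (chF_mem_sd hS hn (mem_Fcts.1 hτ).1), ?_⟩
      exact fun hL => hd.2 (mem_Xp.2 (Or.inl hL))
    · intro hd
      rw [RelCplx.sdR, RelCplx.faces, Finset.mem_sdiff] at hd
      obtain ⟨ℓ, hℓW, hℓsub⟩ := exists_word_cover' hS hv hd.1 hd.2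
      obtain ⟨q, hqN, hqe⟩ := List.mem_iff_getElem.1 (mem_ws.2 hℓW)
      have hsubq : d ⊆ chF (wl S v q) := by rw [wl_eq hqN, hqe]; exact hℓsub
      obtain ⟨i, hiN, hif⟩ := exists_min_tile hd.2 hqN hsubq
      exact ⟨⟨i, hiN⟩, Finset.mem_univ _, hif⟩

lemma prefixFaces_eq (hS : S.IsValid) (hv : {v} ∈ S.K) (hvmin : ∀ w, v ≤ w) (p : ℕ)
    (hp : p ≤ (ws S v).length) :
    (theTiling hS hv hvmin).prefixFaces p =
      ((Finset.range p).biUnion fun q => (chF (wl S v q)).powerset) \ sd S.L := by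
  ext d
  rw [Tiling.prefixFaces, Finset.mem_biUnion, Finset.mem_sdiff, Finset.mem_biUnion]
  constructor
  · rintro ⟨i, hi, hd⟩
    rw [Finset.mem_filter] at hi
    have hd' := mem_tl_faces.1 hd
    exact ⟨⟨i.1, Finset.mem_range.2 hi.2, Finset.mem_powerset.2 hd'.1⟩,
      fun hL => hd'.2 (mem_Xp.2 (Or.inl hL))⟩
  · rintro ⟨⟨q, hq, hsub⟩, hdL⟩
    rw [Finset.mem_range] at hq
    rw [Finset.mem_powerset] at hsub
    obtain ⟨i, hip, hif⟩ := exists_min_tile hdL hq hsub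
    exact ⟨⟨i, by omega⟩, Finset.mem_filter.2 ⟨Finset.mem_univ _, hip⟩, hif⟩

lemma shelling_thm (hS : S.IsValid) (hv : {v} ∈ S.K) (hvmin : ∀ w, v ≤ w) :
    (theTiling hS hv hvmin).IsShelling := by
  intro p hp
  have hpre := prefixFaces_eq hS hv hvmin p hp
  have heq : S.sdR.L ∪ (theTiling hS hv hvmin).prefixFaces p = Xp S v p := by
    rw [hpre]
    show sd S.L ∪ ((Finset.range p).biUnion fun q => (chF (wl S v q)).powerset) \ sd S.L
      = Xp S v p
    rw [Finset.union_sdiff_self_eq_union]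
    rfl
  rw [heq]
  intro c hc t ht
  exact Xp_down hc ht

lemma morse_thm (hS : S.IsValid) (hv : {v} ∈ S.K) (hvmin : ∀ w, v ≤ w) :
    (theTiling hS hv hvmin).IsMorse := fun i => tile_morse hS hv hvmin i.2

lemma nat_down_set {D : Finset ℕ} (hD : ∀ x ∈ D, ∀ y ≤ x, y ∈ D) {i : ℕ} :
    i ∈ D ↔ i < D.card := by
  constructor
  · intro hi
    have hsub : Finset.range (i+1) ⊆ D := fun y hy =>
      hD i hi y (by rw [Finset.mem_range] at hy; omega)
    have := Finset.card_le_card hsub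
    rw [Finset.card_range] at this; omega
  · intro hi
    by_contra hcon
    have hsub : D ⊆ Finset.range i := by
      intro x hx
      rw [Finset.mem_range]
      by_contra hxi
      exact hcon (hD x hx i (by omega))
    have := Finset.card_le_card hsub
    rw [Finset.card_range] at this; omega

/-- The number of tiles in the initial star block. -/
noncomputable def p0 (S : RelCplx V) (v : V) : ℕ :=
  ((Finset.range (ws S v).length).filter fun q => phase v (wl S v q) = 0).card

lemma phase_le_of_le {i j : ℕ} (hij : i ≤ j) (hj : j < (ws S v).length) :
    phase v (wl S v i) ≤ phase v (wl S v j) := by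
  rcases eq_or_lt_of_le hij with rfl | h
  · exact le_rfl
  · rcases gkey_lt_cases (wl_gkey_lt h hj) with hc | ⟨hc, -⟩
    · omega
    · omega

lemma p0_le : p0 S v ≤ (ws S v).length := by
  rw [p0]
  calc _ ≤ (Finset.range (ws S v).length).card := Finset.card_filter_le _ _
    _ = _ := Finset.card_range _

lemma lt_p0_iff {q : ℕ} (hq : q < (ws S v).length) :
    q < p0 S v ↔ phase v (wl S v q) = 0 := by
  have hD : ∀ x ∈ (Finset.range (ws S v).length).filter (fun q => phase v (wl S v q) = 0),
      ∀ y ≤ x, y ∈ (Finset.range (ws S v).length).filter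
        (fun q => phase v (wl S v q) = 0) := by
    intro x hx y hy
    rw [Finset.mem_filter, Finset.mem_range] at hx ⊢
    refine ⟨by omega, ?_⟩
    have := phase_le_of_le (S := S) hy hx.1
    omega
  rw [p0, ← nat_down_set hD, Finset.mem_filter, Finset.mem_range]
  constructor
  · rintro ⟨-, h⟩; exact h
  · intro h; exact ⟨hq, h⟩

lemma mem_relDN {d : Finset (Finset V)} :
    d ∈ relDerivedNbhd (closedT {v}) S ↔
      insert ({v} : Finset V) d ∈ sd S.K ∧ d ∉ sd S.L := by
  have hsupp : suppK (closedT ({v} : Finset V)) = {v} := by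
    show (({v} : Finset V).powerset).sup id = {v}
    apply Finset.Subset.antisymm
    · intro x hx
      rw [Finset.mem_sup] at hx
      obtain ⟨s, hs, hxs⟩ := hx
      exact Finset.mem_powerset.1 hs hxs
    · exact Finset.le_sup (f := id) (s := ({v} : Finset V).powerset)
        (Finset.mem_powerset.2 (Finset.Subset.refl _))
  have hrw : relDerivedNbhd (closedT {v}) S =
      (star (sd S.K) {({v} : Finset V)} \ star (sd S.L) {({v} : Finset V)}) ∩
        (sd S.K \ sd S.L) := by
    rw [relDerivedNbhd, hsupp, Finset.singleton_biUnion]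
    rfl
  rw [hrw]
  constructor
  · intro h
    rw [Finset.mem_inter, Finset.mem_sdiff, Finset.mem_sdiff] at h
    obtain ⟨⟨hA, hB⟩, hK, hL⟩ := h
    rw [star, Finset.mem_filter, ← Finset.insert_eq] at hA
    exact ⟨hA.2, hL⟩
  · rintro ⟨hins, hL⟩
    have hdK : d ∈ sd S.K := sd_down (Finset.subset_insert _ _) hins
    rw [Finset.mem_inter, Finset.mem_sdiff, Finset.mem_sdiff]
    refine ⟨⟨?_, ?_⟩, hdK, hL⟩
    · rw [star, Finset.mem_filter, ← Finset.insert_eq]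
      exact ⟨hdK, hins⟩
    · rw [star, Finset.mem_filter]
      exact fun hB => hL hB.1

lemma star_eq (hS : S.IsValid) (hv : {v} ∈ S.K) (hvmin : ∀ w, v ≤ w) :
    ((Finset.range (p0 S v)).biUnion fun q => (chF (wl S v q)).powerset) \ sd S.L
      = relDerivedNbhd (closedT {v}) S := by
  ext d
  rw [Finset.mem_sdiff, Finset.mem_biUnion, mem_relDN]
  constructor
  · rintro ⟨⟨q, hq, hsub⟩, hdL⟩
    rw [Finset.mem_range] at hq
    rw [Finset.mem_powerset] at hsub
    have hqN : q < (ws S v).length := lt_of_lt_of_le hq p0_le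
    obtain ⟨hn, hτ, hlen⟩ := wl_basic hv hqN
    have hph : phase v (wl S v q) = 0 := (lt_p0_iff hqN).1 hq
    have hvm : ({v} : Finset V) ∈ chF (wl S v q) := mem_of_phase_zero hph hlen
    refine ⟨sd_down ?_ (chF_mem_sd hS hn (mem_Fcts.1 hτ).1), hdL⟩
    exact Finset.insert_subset hvm hsub
  · rintro ⟨hins, hdL⟩
    obtain ⟨hKne, helts, hch⟩ := mem_sd.1 hins
    obtain ⟨s', hs', hmax⟩ := chain_max (Finset.insert_nonempty _ _) hch
    have hs'L : s' ∉ S.L := by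
      by_cases hL : S.L = ∅
      · rw [hL]; exact Finset.notMem_empty _
      · have : ¬ ∀ s ∈ d, s ∈ S.L := by
          intro hall
          apply hdL
          rw [mem_sd]
          exact ⟨hL, fun s hs => ⟨hall s hs, (helts s (Finset.mem_insert_of_mem hs)).2⟩,
            fun a ha b hb => hch a (Finset.mem_insert_of_mem ha) b (Finset.mem_insert_of_mem hb)⟩
        push_neg at this
        obtain ⟨s₀, hs₀, hs₀L⟩ := this
        intro hs'mem
        exact hs₀L (hS.2.1 s' hs'mem s₀ (hmax s₀ (Finset.mem_insert_of_mem hs₀)))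
    have hs'K : s' ∈ S.K := (helts s' hs').1
    obtain ⟨τ, hτ, hsτ⟩ := exists_facet hS hs'K hs'L
    obtain ⟨ℓ, hn, ht, hc⟩ := chainExtend (insert ({v} : Finset V) d).card τ (insert {v} d) rfl
      (fun s hs => ⟨(hmax s hs).trans hsτ, (helts s hs).2⟩) hch
    have hW : ℓ ∈ Words S := mem_Words.2 ⟨hn, ht ▸ hτ⟩
    have hph : phase v ℓ = 0 := phase_zero_of_mem hn (hc _ (Finset.mem_insert_self _ _))
    obtain ⟨q, hqN, hqe⟩ := List.mem_iff_getElem.1 (mem_ws.2 hW)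
    have hwlq : wl S v q = ℓ := by rw [wl_eq hqN, hqe]
    have hqp0 : q < p0 S v := (lt_p0_iff hqN).2 (by rw [hwlq]; exact hph)
    refine ⟨⟨q, Finset.mem_range.2 hqp0, Finset.mem_powerset.2 ?_⟩, hdL⟩
    rw [hwlq]
    exact fun s hs => hc s (Finset.mem_insert_of_mem hs)

lemma begins_thm (hS : S.IsValid) (hv : {v} ∈ S.K) (hvmin : ∀ w, v ≤ w) :
    (theTiling hS hv hvmin).BeginsWith (relDerivedNbhd (closedT {v}) S) :=
  ⟨p0 S v, p0_le, by rw [prefixFaces_eq hS hv hvmin (p0 S v) p0_le, star_eq hS hv hvmin]⟩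

lemma master_lemma (hS : S.IsValid) (hv : {v} ∈ S.K) (hvmin : ∀ w, v ≤ w) :
    ∃ (N : ℕ) (Tl : Tiling S.sdR N), Tl.IsMorse ∧ Tl.IsShelling ∧
      Tl.BeginsWith (relDerivedNbhd (closedT {v}) S) :=
  ⟨(ws S v).length, theTiling hS hv hvmin, morse_thm hS hv hvmin, shelling_thm hS hv hvmin,
    begins_thm hS hv hvmin⟩

end MorseAux

lemma exists_bot_order {V : Type*} (v : V) : ∃ r : LinearOrder V, ∀ w, r.le v w := by
  classical
  letI : LinearOrder V := linearOrderOfSTO WellOrderingRel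
  have hinj : Function.Injective (fun w : V => toLex ((if w = v then false else true), w)) := by
    intro a b h
    have := congrArg (fun z => (ofLex z).2) h
    simpa using this
  refine ⟨LinearOrder.lift' _ hinj, fun w => ?_⟩
  show toLex ((if v = v then false else true), v) ≤ toLex ((if w = v then false else true), w)
  rw [if_pos rfl]
  by_cases hw : w = v
  · subst hw; rw [if_pos rfl]
  · rw [if_neg hw]
    refine le_of_lt (Prod.Lex.lt_iff.2 (Or.inl ?_))
    show false < true
    decide

/-- **Theorem.** Let `S = K \ L` be a finite relative simplicial complex and `v`
a vertex of `K`. Then `sd S` carries a Morse shelling which begins with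
`st_{sd S}(v̂) = N(v, S)`, the derived neighborhood of `v` in `S`. -/
theorem morse_shelling_of_sd_beginning_with_star
    {V : Type*} [DecidableEq V] (S : RelCplx V) (hS : S.IsValid)
    (v : V) (hv : {v} ∈ S.K) :
    ∃ (N : ℕ) (Tl : Tiling S.sdR N),
      Tl.IsMorse ∧ Tl.IsShelling ∧
      Tl.BeginsWith (relDerivedNbhd (closedT {v}) S) := by
  obtain ⟨r, hr⟩ := exists_bot_order (V := V) v
  letI := r
  exact master_lemma hS hv hr

end MorseShelling
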